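/- arXiv:1210.2274 — 6 statements merged into one kernel-verified Lean document; each statement's English description precedes it below -/
import Mathlib

section
/- Let (Ω, μ) be a measure space and let 1 < p ≤ 2. Let u, v ∈ L^p(Ω, μ) be real-valued, not both equal to 0 almost everywhere. Then ∫_Ω (φ_p(u(x)) − φ_p(v(x)))(u(x) − v(x)) dμ(x) ≥ (p − 1) ‖ |u| + |v| ‖_{L^p}^{p−2} ‖u − v‖_{L^p}^2, where the integrand is nonnegative and integrable. -/
open MeasureTheory

private lemma simon_rpow_subadd {x y z : ℝ} (hx : 0 ≤ x) (hy : 0 ≤ y) (hz0 : 0 ≤ z)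
    (hz1 : z ≤ 1) : (x + y) ^ z ≤ x ^ z + y ^ z := by
  have h := NNReal.rpow_add_le_add_rpow x.toNNReal y.toNNReal hz0 hz1
  have h2 := NNReal.coe_le_coe.2 h
  rw [NNReal.coe_add, NNReal.coe_rpow, NNReal.coe_rpow, NNReal.coe_rpow, NNReal.coe_add,
    Real.coe_toNNReal x hx, Real.coe_toNNReal y hy] at h2
  exact h2

/-- φ on nonneg values -/
private lemma simon_phi_nonneg {p s : ℝ} (hp : 1 < p) (hs : 0 ≤ s) :
    |s| ^ (p - 2) * s = s ^ (p - 1) := by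
  rcases eq_or_lt_of_le hs with h | h
  · simp [← h, Real.zero_rpow (by linarith : p - 1 ≠ 0)]
  · rw [abs_of_pos h, show p - 1 = (p - 2) + 1 by ring, Real.rpow_add_one h.ne']

private lemma simon_core {p a b : ℝ} (hp1 : 1 < p) (hp2 : p ≤ 2) (hb : 0 ≤ b) (hab : b < a) :
    (p - 1) * (a + b) ^ (p - 2) * (a - b) ≤ a ^ (p - 1) - b ^ (p - 1) := by
  have ha : 0 < a := lt_of_le_of_lt hb hab
  rcases eq_or_lt_of_le hb with h | hb'
  · -- b = 0
    subst h
    rw [Real.zero_rpow (by linarith : p - 1 ≠ 0), add_zero, sub_zero, sub_zero]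
    have : a ^ (p - 2) * a = a ^ (p - 1) := by
      rw [show p - 1 = (p - 2) + 1 by ring, Real.rpow_add_one ha.ne']
    rw [mul_assoc, this]
    have h1 : p - 1 ≤ 1 := by linarith
    nlinarith [Real.rpow_nonneg ha.le (p - 1)]
  · -- 0 < b, use MVT
    obtain ⟨c, hc, hc'⟩ := exists_hasDerivAt_eq_slope (fun t => t ^ (p - 1))
      (fun t => (p - 1) * t ^ (p - 2)) hab
      (fun t ht => by
        have ht' : 0 < t := lt_of_lt_of_le hb' ht.1
        exact (Real.continuousAt_rpow_const t (p - 1) (Or.inl ht'.ne')).continuousWithinAt)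
      (fun t ht => by
        have ht' : 0 < t := lt_trans hb' ht.1
        have := Real.hasDerivAt_rpow_const (x := t) (p := p - 1) (Or.inl ht'.ne')
        simpa [show p - 1 - 1 = p - 2 by ring, mul_comm] using this)
    have hc0 : 0 < c := lt_trans hb' hc.1
    have hcab : c ≤ a + b := by nlinarith [hc.2]
    have hmono : (a + b) ^ (p - 2) ≤ c ^ (p - 2) :=
      Real.rpow_le_rpow_of_nonpos hc0 hcab (by linarith)
    have hab' : a - b ≠ 0 := sub_ne_zero.2 hab.ne'
    rw [eq_div_iff hab'] at hc'
    rw [← hc']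
    have : (p - 1) * (a + b) ^ (p - 2) ≤ (p - 1) * c ^ (p - 2) :=
      mul_le_mul_of_nonneg_left hmono (by linarith)
    nlinarith [this]

private lemma simon_phi_diff {p a b : ℝ} (hp1 : 1 < p) (hp2 : p ≤ 2) (hab : b < a) :
    (p - 1) * (|a| + |b|) ^ (p - 2) * (a - b) ≤ |a| ^ (p - 2) * a - |b| ^ (p - 2) * b := by
  rcases le_or_gt 0 b with hb | hb
  · -- 0 ≤ b < a
    have ha : 0 ≤ a := le_trans hb hab.le
    rw [simon_phi_nonneg hp1 ha, simon_phi_nonneg hp1 hb, abs_of_nonneg ha, abs_of_nonneg hb]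
    exact simon_core hp1 hp2 hb hab
  · rcases le_or_gt a 0 with ha | ha
    · -- b < a ≤ 0
      have key := simon_core hp1 hp2 (neg_nonneg.2 ha) (by linarith : -a < -b)
      have e1 : |a| ^ (p - 2) * a = -((-a) ^ (p - 1)) := by
        have := simon_phi_nonneg hp1 (neg_nonneg.2 ha) (s := -a) (p := p)
        rw [abs_neg] at this; linarith [this]
      have e2 : |b| ^ (p - 2) * b = -((-b) ^ (p - 1)) := by
        have := simon_phi_nonneg hp1 (by linarith : (0:ℝ) ≤ -b) (s := -b) (p := p)
        rw [abs_neg] at this; linarith [this]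
      rw [e1, e2, abs_of_nonpos ha, abs_of_neg hb]
      rw [show (-b) + -a = -a + -b by ring] at key
      nlinarith [key]
    · -- b < 0 < a
      have hM : (0:ℝ) < a - b := by linarith
      have habs : |a| + |b| = a - b := by rw [abs_of_pos ha, abs_of_neg hb]; ring
      have e2 : |b| ^ (p - 2) * b = -((-b) ^ (p - 1)) := by
        have := simon_phi_nonneg hp1 (by linarith : (0:ℝ) ≤ -b) (s := -b) (p := p)
        rw [abs_neg] at this; linarith [this]
      rw [simon_phi_nonneg hp1 ha.le, e2, habs, sub_neg_eq_add]
      have h1 : (a - b) ^ (p - 1) ≤ a ^ (p - 1) + (-b) ^ (p - 1) := by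
        have := simon_rpow_subadd ha.le (by linarith : (0:ℝ) ≤ -b)
          (by linarith : (0:ℝ) ≤ p - 1) (by linarith) 
        rwa [show a + -b = a - b by ring] at this
      have h2 : (a - b) ^ (p - 2) * (a - b) = (a - b) ^ (p - 1) := by
        rw [show p - 1 = (p - 2) + 1 by ring, Real.rpow_add_one hM.ne']
      have h3 : (p - 1) * (a - b) ^ (p - 1) ≤ (a - b) ^ (p - 1) := by
        nlinarith [Real.rpow_nonneg hM.le (p - 1)]
      calc (p - 1) * (a - b) ^ (p - 2) * (a - b) = (p - 1) * ((a - b) ^ (p - 1)) := by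
            rw [mul_assoc, h2]
        _ ≤ (a - b) ^ (p - 1) := h3
        _ ≤ a ^ (p - 1) + (-b) ^ (p - 1) := h1

private lemma simon_pointwise {p : ℝ} (hp1 : 1 < p) (hp2 : p ≤ 2) (a b : ℝ) :
    (p - 1) * (|a| + |b|) ^ (p - 2) * (a - b) ^ 2 ≤
      (|a| ^ (p - 2) * a - |b| ^ (p - 2) * b) * (a - b) := by
  rcases lt_trichotomy a b with h | h | h
  · have key := simon_phi_diff hp1 hp2 h
    rw [show |b| + |a| = |a| + |b| by ring] at key
    nlinarith [mul_le_mul_of_nonneg_right key (by linarith : (0:ℝ) ≤ b - a)]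
  · simp [h]
  · have key := simon_phi_diff hp1 hp2 h
    nlinarith [mul_le_mul_of_nonneg_right key (by linarith : (0:ℝ) ≤ a - b)]


private lemma simon_phi_abs_le {p a W : ℝ} (hp1 : 1 < p) (h : |a| ≤ W) :
    |(|a| ^ (p - 2) * a)| ≤ W ^ (p - 1) := by
  rw [abs_mul, abs_of_nonneg (Real.rpow_nonneg (abs_nonneg a) _)]
  rcases eq_or_ne a 0 with rfl | ha
  · simpa using Real.rpow_nonneg (le_trans (abs_nonneg (0:ℝ)) h) (p - 1)
  · have ha' : (0:ℝ) < |a| := abs_pos.2 ha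
    rw [show p - 1 = (p - 2) + 1 by ring, ← Real.rpow_add_one ha'.ne']
    exact Real.rpow_le_rpow (abs_nonneg a) h (by linarith)

private lemma simon_rpow_mul_self {W y : ℝ} (hW : 0 ≤ W) (hy : y ≠ 0) (hy1 : y + 1 ≠ 0) :
    W ^ y * W = W ^ (y + 1) := by
  rcases eq_or_lt_of_le hW with h | h
  · rw [← h, Real.zero_rpow hy, Real.zero_rpow hy1, zero_mul]
  · rw [Real.rpow_add_one h.ne']

private lemma simon_g_bound {p : ℝ} (hp1 : 1 < p) (a b : ℝ) :
    |(|a| ^ (p - 2) * a - |b| ^ (p - 2) * b) * (a - b)| ≤ 2 * (|a| + |b|) ^ p := by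
  set W := |a| + |b| with hWdef
  have hW0 : 0 ≤ W := by positivity
  have h1 : |(|a| ^ (p - 2) * a - |b| ^ (p - 2) * b)| ≤ 2 * W ^ (p - 1) := by
    calc |(|a| ^ (p - 2) * a - |b| ^ (p - 2) * b)|
        ≤ |(|a| ^ (p - 2) * a)| + |(|b| ^ (p - 2) * b)| := abs_sub _ _
      _ ≤ W ^ (p - 1) + W ^ (p - 1) := add_le_add
          (simon_phi_abs_le hp1 (by simp [hWdef, abs_nonneg]))
          (simon_phi_abs_le hp1 (by simp [hWdef, abs_nonneg]))
      _ = 2 * W ^ (p - 1) := by ring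
  have h2 : |a - b| ≤ W := (abs_sub a b)
  calc |(|a| ^ (p - 2) * a - |b| ^ (p - 2) * b) * (a - b)|
      = |(|a| ^ (p - 2) * a - |b| ^ (p - 2) * b)| * |a - b| := abs_mul _ _
    _ ≤ (2 * W ^ (p - 1)) * W := by
        apply mul_le_mul h1 h2 (abs_nonneg _)
        positivity
    _ = 2 * (W ^ (p - 1) * W) := by ring
    _ = 2 * W ^ p := by
        rw [simon_rpow_mul_self hW0 (by linarith) (by linarith), show p - 1 + 1 = p by ring]

private lemma simon_abs_add_zero {a b : ℝ} (h : |a| + |b| = 0) : a = 0 ∧ b = 0 := by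
  constructor <;> [skip; skip] <;>
  · rw [← abs_eq_zero]
    nlinarith [abs_nonneg a, abs_nonneg b]

private lemma simon_I_bound {p : ℝ} (hp1 : 1 < p) (hp2 : p ≤ 2) (a b : ℝ) :
    (|a| + |b|) ^ (p - 2) * (a - b) ^ 2 ≤ (|a| + |b|) ^ p := by
  set W := |a| + |b| with hWdef
  rcases eq_or_lt_of_le (by positivity : (0:ℝ) ≤ W) with h | h
  · obtain ⟨ha, hb⟩ := simon_abs_add_zero h.symm
    subst ha; subst hb
    simp [hWdef, Real.zero_rpow (show p ≠ 0 by linarith)]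
  · have hd : |a - b| ≤ W := abs_sub a b
    have hd2 : (a - b) ^ 2 ≤ W ^ 2 := by nlinarith [abs_nonneg (a - b), neg_abs_le (a - b), le_abs_self (a-b)]
    calc W ^ (p - 2) * (a - b) ^ 2 ≤ W ^ (p - 2) * W ^ 2 :=
          mul_le_mul_of_nonneg_left hd2 (Real.rpow_nonneg h.le _)
      _ = W ^ (p - 2) * W ^ ((2:ℕ):ℝ) := by rw [Real.rpow_natCast]
      _ = W ^ p := by
          rw [← Real.rpow_add h, show (p - 2) + ((2:ℕ):ℝ) = p by push_cast; ring]

/-- Lemma 3.2 of the paper (Simon): for a measure space `(Ω, μ)`, `1 < p ≤ 2`, and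
`u, v ∈ L^p(Ω, μ)` real-valued, not both `0` a.e., the integrand
`(φ_p(u) - φ_p(v))(u - v)` (with `φ_p t = |t|^(p-2) t`, `φ_p 0 = 0`) is a.e. nonnegative
and integrable, and
`∫ (φ_p(u) - φ_p(v))(u - v) dμ ≥ (p-1) ‖|u|+|v|‖_p^(p-2) ‖u-v‖_p²`. -/
theorem simon_integral_inequality {Ω : Type*} [MeasurableSpace Ω] (μ : Measure Ω)
    (p : ℝ) (hp1 : 1 < p) (hp2 : p ≤ 2) (u v : Ω → ℝ)
    (hu : MemLp u (ENNReal.ofReal p) μ) (hv : MemLp v (ENNReal.ofReal p) μ)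
    (hne : ¬ (u =ᵐ[μ] 0 ∧ v =ᵐ[μ] 0)) :
    (∀ᵐ x ∂μ, 0 ≤ (|u x| ^ (p - 2) * u x - |v x| ^ (p - 2) * v x) * (u x - v x)) ∧
    Integrable (fun x => (|u x| ^ (p - 2) * u x - |v x| ^ (p - 2) * v x) * (u x - v x)) μ ∧
    (p - 1) * (eLpNorm (fun x => |u x| + |v x|) (ENNReal.ofReal p) μ).toReal ^ (p - 2) *
        (eLpNorm (u - v) (ENNReal.ofReal p) μ).toReal ^ 2 ≤
      ∫ x, (|u x| ^ (p - 2) * u x - |v x| ^ (p - 2) * v x) * (u x - v x) ∂μ := by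
  have hp0 : (ENNReal.ofReal p) ≠ 0 := (ENNReal.ofReal_pos.2 (by linarith)).ne'
  have hptop : (ENNReal.ofReal p) ≠ ⊤ := ENNReal.ofReal_ne_top
  have htr : (ENNReal.ofReal p).toReal = p := ENNReal.toReal_ofReal (by linarith)
  have hpne : p ≠ 0 := by linarith
  have hum := hu.aestronglyMeasurable.aemeasurable
  have hvm := hv.aestronglyMeasurable.aemeasurable
  -- pointwise lower bound and nonnegativity
  have hlow : ∀ x, (p - 1) * ((|u x| + |v x|) ^ (p - 2) * (u x - v x) ^ 2) ≤
      (|u x| ^ (p - 2) * u x - |v x| ^ (p - 2) * v x) * (u x - v x) := fun x => by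
    rw [← mul_assoc]; exact simon_pointwise hp1 hp2 (u x) (v x)
  have hnn : ∀ x, 0 ≤ (|u x| ^ (p - 2) * u x - |v x| ^ (p - 2) * v x) * (u x - v x) := fun x => by
    refine le_trans ?_ (hlow x)
    have h1 := Real.rpow_nonneg (by positivity : (0:ℝ) ≤ |u x| + |v x|) (p - 2)
    exact mul_nonneg (by linarith) (mul_nonneg h1 (sq_nonneg _))
  -- MemLp of w
  have hwm : MemLp (fun x => |u x| + |v x|) (ENNReal.ofReal p) μ := hu.abs.add hv.abs
  -- integrability of w^p
  have hwp_int : Integrable (fun x => (|u x| + |v x|) ^ p) μ := by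
    have h := hwm.integrable_norm_rpow hp0 hptop
    rw [htr] at h
    refine h.congr (Filter.Eventually.of_forall fun x => ?_)
    have hx : (0:ℝ) ≤ |u x| + |v x| := by positivity
    simp [Real.norm_eq_abs, abs_of_nonneg hx]
  -- measurability of the integrand
  have hg_meas : AEStronglyMeasurable
      (fun x => (|u x| ^ (p - 2) * u x - |v x| ^ (p - 2) * v x) * (u x - v x)) μ :=
    (((((continuous_abs.measurable.comp_aemeasurable hum).pow_const (p - 2)).mul hum).sub
      (((continuous_abs.measurable.comp_aemeasurable hvm).pow_const (p - 2)).mul hvm)).mul (hum.sub hvm)).aestronglyMeasurable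
  -- integrability of the integrand
  have hg_int : Integrable
      (fun x => (|u x| ^ (p - 2) * u x - |v x| ^ (p - 2) * v x) * (u x - v x)) μ := by
    refine Integrable.mono' (hwp_int.const_mul 2) hg_meas
      (Filter.Eventually.of_forall fun x => ?_)
    rw [Real.norm_eq_abs]
    exact simon_g_bound hp1 (u x) (v x)
  refine ⟨Filter.Eventually.of_forall hnn, hg_int, ?_⟩
  -- integrability of the I integrand
  have hI_int : Integrable (fun x => (|u x| + |v x|) ^ (p - 2) * (u x - v x) ^ 2) μ := by
    refine Integrable.mono' hwp_int
      (((((continuous_abs.measurable.comp_aemeasurable hum).add (continuous_abs.measurable.comp_aemeasurable hvm)).pow_const (p - 2)).mul ((hum.sub hvm).pow_const 2)).aestronglyMeasurable)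
      (Filter.Eventually.of_forall fun x => ?_)
    rw [Real.norm_eq_abs, abs_of_nonneg (by positivity)]
    exact simon_I_bound hp1 hp2 (u x) (v x)
  set W : ℝ := (eLpNorm (fun x => |u x| + |v x|) (ENNReal.ofReal p) μ).toReal with hWdef
  set N : ℝ := (eLpNorm (u - v) (ENNReal.ofReal p) μ).toReal with hNdef
  set I : ℝ := ∫ x, (|u x| + |v x|) ^ (p - 2) * (u x - v x) ^ 2 ∂μ with hIdef
  have hI0 : 0 ≤ I := integral_nonneg fun x => by positivity
  have hN0 : 0 ≤ N := ENNReal.toReal_nonneg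
  have hW0 : 0 ≤ W := ENNReal.toReal_nonneg
  -- step 1 : (p-1) * I ≤ ∫ g
  have hA : (p - 1) * I ≤
      ∫ x, (|u x| ^ (p - 2) * u x - |v x| ^ (p - 2) * v x) * (u x - v x) ∂μ := by
    have h := integral_mono (hI_int.const_mul (p - 1)) hg_int hlow
    rwa [integral_const_mul] at h
  -- step 2 : eLpNorm-integral identities
  have hNp : N ^ p = ∫ x, |u x - v x| ^ p ∂μ := by
    have h := (hu.sub hv).eLpNorm_eq_integral_rpow_norm hp0 hptop
    have h2 : N = (∫ x, |u x - v x| ^ p ∂μ) ^ p⁻¹ := by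
      rw [hNdef, h, ENNReal.toReal_ofReal (by positivity)]
      simp [htr, Real.norm_eq_abs]
    rw [h2, Real.rpow_inv_rpow (integral_nonneg fun x => by positivity) hpne]
  have hWp : W ^ p = ∫ x, (|u x| + |v x|) ^ p ∂μ := by
    have h := hwm.eLpNorm_eq_integral_rpow_norm hp0 hptop
    have h2 : W = (∫ x, (|u x| + |v x|) ^ p ∂μ) ^ p⁻¹ := by
      rw [hWdef, h, htr, ENNReal.toReal_ofReal (by positivity)]
      congr 1
      refine integral_congr_ae (Filter.Eventually.of_forall fun x => ?_)
      have hx : (0:ℝ) ≤ |u x| + |v x| := by positivity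
      simp [Real.norm_eq_abs, abs_of_nonneg hx]
    rw [h2, Real.rpow_inv_rpow (integral_nonneg fun x => by positivity) hpne]
  -- step 3 : positivity of W
  have hW_pos : 0 < W := by
    have hne' : ¬ (fun x => |u x| + |v x|) =ᵐ[μ] 0 := by
      intro h
      refine hne ⟨h.mono fun x hx => ?_, h.mono fun x hx => ?_⟩ <;>
        simp only [Pi.zero_apply] at hx ⊢
      · exact (simon_abs_add_zero hx).1
      · exact (simon_abs_add_zero hx).2
    have hsn : eLpNorm (fun x => |u x| + |v x|) (ENNReal.ofReal p) μ ≠ 0 := by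
      rw [Ne, eLpNorm_eq_zero_iff hwm.1 hp0]
      exact hne'
    exact ENNReal.toReal_pos hsn hwm.2.ne
  -- step 4 : KEY : W^(p-2) * N^2 ≤ I
  have KEY : W ^ (p - 2) * N ^ 2 ≤ I := by
    have hwam : AEMeasurable (fun x => |u x| + |v x|) μ :=
      (continuous_abs.measurable.comp_aemeasurable hum).add
        (continuous_abs.measurable.comp_aemeasurable hvm)
    by_cases hpe : p = 2
    · subst hpe
      have hL : N ^ (2:ℕ) = I := by
        rw [hIdef]
        calc N ^ (2:ℕ) = N ^ ((2:ℕ):ℝ) := (Real.rpow_natCast N 2).symm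
          _ = ∫ x, |u x - v x| ^ (2:ℝ) ∂μ := by rw [show ((2:ℕ):ℝ) = (2:ℝ) by norm_num, hNp]
          _ = ∫ x, (|u x| + |v x|) ^ ((2:ℝ) - 2) * (u x - v x) ^ 2 ∂μ := by
              refine integral_congr_ae (Filter.Eventually.of_forall fun x => ?_)
              show |u x - v x| ^ (2:ℝ) = (|u x| + |v x|) ^ ((2:ℝ) - 2) * (u x - v x) ^ 2
              rw [show (2:ℝ) - 2 = 0 by norm_num, Real.rpow_zero, one_mul,
                show (2:ℝ) = ((2:ℕ):ℝ) by norm_num, Real.rpow_natCast, sq_abs]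
      rw [show (2:ℝ) - 2 = 0 by norm_num, Real.rpow_zero, one_mul, hL]
    · have hplt : p < 2 := lt_of_le_of_ne hp2 hpe
      have h2p : (0:ℝ) < 2 - p := by linarith
      have hp_pos : (0:ℝ) < p := by linarith
      have hPQ : (2/p).HolderConjugate (2/(2-p)) :=
        Real.holderConjugate_iff.mpr ⟨by rw [lt_div_iff₀ hp_pos]; linarith, by field_simp; ring⟩
      set hh : Ω → ℝ := fun x => (|u x| + |v x|) ^ ((p-2)/2) * |u x - v x| with hhdef
      have hh0 : ∀ x, 0 ≤ hh x := fun x => by rw [hhdef]; positivity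
      have hh_meas : AEMeasurable hh μ :=
        (hwam.pow_const _).mul (continuous_abs.measurable.comp_aemeasurable (hum.sub hvm))
      have hh2 : ∀ x, hh x ^ (2:ℕ) = (|u x| + |v x|) ^ (p-2) * (u x - v x) ^ 2 := fun x => by
        have hx0 : (0:ℝ) ≤ |u x| + |v x| := by positivity
        rw [hhdef]
        rw [mul_pow, sq_abs, ← Real.rpow_natCast ((|u x| + |v x|) ^ ((p-2)/2)) 2,
          ← Real.rpow_mul hx0, show (p-2)/2 * ((2:ℕ):ℝ) = p - 2 by push_cast; ring]
      have hMh : MemLp hh 2 μ :=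
        (memLp_two_iff_integrable_sq hh_meas.aestronglyMeasurable).2
          (hI_int.congr (Filter.Eventually.of_forall fun x => (hh2 x).symm))
      set f : Ω → ℝ := fun x => hh x ^ p with hfdef
      set g0 : Ω → ℝ := fun x => (|u x| + |v x|) ^ (p * (2 - p) / 2) with hg0def
      have hf0 : ∀ x, 0 ≤ f x := fun x => Real.rpow_nonneg (hh0 x) p
      have hg00 : ∀ x, 0 ≤ g0 x := fun x => Real.rpow_nonneg (by positivity) _
      have hMf : MemLp f (ENNReal.ofReal (2/p)) μ := by
        have he : f = fun x => ‖hh x‖ ^ p :=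
          funext fun x => by rw [Real.norm_eq_abs, abs_of_nonneg (hh0 x)]
        refine ⟨(hh_meas.pow_const p).aestronglyMeasurable, ?_⟩
        rw [he, eLpNorm_norm_rpow hh hp_pos]
        have h1 : ENNReal.ofReal (2/p) * ENNReal.ofReal p = 2 := by
          rw [← ENNReal.ofReal_mul (by positivity), div_mul_cancel₀ 2 hpne]
          exact ENNReal.ofReal_ofNat 2
        rw [h1]
        exact ENNReal.rpow_lt_top_of_nonneg (by linarith) hMh.2.ne
      have hMg : MemLp g0 (ENNReal.ofReal (2/(2-p))) μ := by
        have he : g0 = fun x => ‖|u x| + |v x|‖ ^ (p * (2 - p) / 2) :=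
          funext fun x => by rw [Real.norm_eq_abs, abs_of_nonneg (by positivity)]
        refine ⟨(hwam.pow_const _).aestronglyMeasurable, ?_⟩
        rw [he, eLpNorm_norm_rpow _ (by positivity : (0:ℝ) < p * (2-p)/2)]
        have h1 : ENNReal.ofReal (2/(2-p)) * ENNReal.ofReal (p * (2 - p) / 2)
            = ENNReal.ofReal p := by
          rw [← ENNReal.ofReal_mul (by positivity)]
          congr 1
          field_simp
        rw [h1]
        exact ENNReal.rpow_lt_top_of_nonneg (by positivity) hwm.2.ne
      have H := integral_mul_le_Lp_mul_Lq_of_nonneg hPQ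
        (Filter.Eventually.of_forall hf0) (Filter.Eventually.of_forall hg00) hMf hMg
      have hfg : ∀ x, f x * g0 x = |u x - v x| ^ p := fun x => by
        by_cases hx : |u x| + |v x| = 0
        · obtain ⟨h1, h2⟩ := simon_abs_add_zero hx
          simp [hfdef, hg0def, hhdef, h1, h2, Real.zero_rpow hpne]
        · have hx0 : (0:ℝ) ≤ |u x| + |v x| := by positivity
          have hx' : (0:ℝ) < |u x| + |v x| := lt_of_le_of_ne hx0 (Ne.symm hx)
          have e1 : ((|u x| + |v x|) ^ ((p-2)/2)) ^ p * (|u x| + |v x|) ^ (p*(2-p)/2) = 1 := by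
            rw [← Real.rpow_mul hx0, ← Real.rpow_add hx',
              show (p-2)/2*p + p*(2-p)/2 = 0 by ring, Real.rpow_zero]
          rw [hfdef, hg0def, hhdef]
          calc ((|u x| + |v x|) ^ ((p-2)/2) * |u x - v x|) ^ p
                * (|u x| + |v x|) ^ (p * (2 - p) / 2)
              = (((|u x| + |v x|) ^ ((p-2)/2)) ^ p * (|u x| + |v x|) ^ (p*(2-p)/2))
                * |u x - v x| ^ p := by
                rw [Real.mul_rpow (by positivity) (abs_nonneg _)]; ring
            _ = |u x - v x| ^ p := by rw [e1, one_mul]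
      have hfP : ∀ x, f x ^ (2/p) = (|u x| + |v x|) ^ (p-2) * (u x - v x) ^ 2 := fun x => by
        rw [hfdef]
        calc (hh x ^ p) ^ (2/p) = hh x ^ (p * (2/p)) := (Real.rpow_mul (hh0 x) p (2/p)).symm
          _ = hh x ^ ((2:ℕ):ℝ) := by rw [show p * (2/p) = ((2:ℕ):ℝ) by push_cast; field_simp]
          _ = hh x ^ (2:ℕ) := Real.rpow_natCast _ 2
          _ = _ := hh2 x
      have hgQ : ∀ x, g0 x ^ (2/(2-p)) = (|u x| + |v x|) ^ p := fun x => by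
        have hx0 : (0:ℝ) ≤ |u x| + |v x| := by positivity
        rw [hg0def, ← Real.rpow_mul hx0, show p * (2-p)/2 * (2/(2-p)) = p by field_simp]
      rw [integral_congr_ae (Filter.Eventually.of_forall hfg),
        integral_congr_ae (Filter.Eventually.of_forall hfP),
        integral_congr_ae (Filter.Eventually.of_forall hgQ), ← hNp, ← hWp, ← hIdef] at H
      -- H : N ^ p ≤ I ^ (1/(2/p)) * (W ^ p) ^ (1/(2/(2-p)))
      have hq := Real.rpow_le_rpow (Real.rpow_nonneg hN0 p) H (by positivity : (0:ℝ) ≤ 2/p)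
      have hL : (N ^ p) ^ (2/p) = N ^ (2:ℕ) := by
        rw [← Real.rpow_natCast N 2, ← Real.rpow_mul hN0,
          show p * (2/p) = ((2:ℕ):ℝ) by push_cast; field_simp]
      have hR : (I ^ (1/(2/p)) * (W ^ p) ^ (1/(2/(2-p)))) ^ (2/p) = I * W ^ (2 - p) := by
        rw [Real.mul_rpow (Real.rpow_nonneg hI0 _) (Real.rpow_nonneg (Real.rpow_nonneg hW0 p) _),
          ← Real.rpow_mul hI0, show 1/(2/p) * (2/p) = 1 by field_simp, Real.rpow_one,
          ← Real.rpow_mul (Real.rpow_nonneg hW0 p), ← Real.rpow_mul hW0,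
          show p * (1/(2/(2-p)) * (2/p)) = 2 - p by field_simp]
      rw [hL, hR] at hq
      calc W ^ (p - 2) * N ^ 2 ≤ W ^ (p - 2) * (I * W ^ (2 - p)) :=
            mul_le_mul_of_nonneg_left hq (Real.rpow_nonneg hW0 _)
        _ = I * (W ^ (p - 2) * W ^ (2 - p)) := by ring
        _ = I := by
            rw [← Real.rpow_add hW_pos, show p - 2 + (2 - p) = 0 by ring, Real.rpow_zero, mul_one]
  calc (p - 1) * W ^ (p - 2) * N ^ 2 = (p - 1) * (W ^ (p - 2) * N ^ 2) := by ring
    _ ≤ (p - 1) * I := mul_le_mul_of_nonneg_left KEY (by linarith)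
    _ ≤ _ := hA
end

section
/- Let (Ω, μ) be a measure space and let p ≥ 2, with conjugate exponent p' = p/(p−1). Let u, v ∈ L^p(Ω, μ) be real-valued. Then the function φ_p(u) − φ_p(v) belongs to L^{p'}(Ω, μ) and ‖φ_p(u) − φ_p(v)‖_{L^{p'}} ≤ (p − 1) ‖ |u| + |v| ‖_{L^p}^{p−2} ‖u − v‖_{L^p}. -/
open MeasureTheory

private lemma hasDerivAt_phi {q : ℝ} (hq : 0 < q) (t : ℝ) :
    HasDerivAt (fun s : ℝ => |s| ^ q * s) ((q + 1) * |t| ^ q) t := by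
  rcases eq_or_ne t 0 with rfl | ht
  · -- derivative 0 at 0
    have h0 : (q + 1) * |(0:ℝ)| ^ q = 0 := by
      simp [Real.zero_rpow hq.ne']
    rw [h0, hasDerivAt_iff_tendsto_slope]
    have hcont : Filter.Tendsto (fun s : ℝ => |s| ^ q) (nhds 0) (nhds 0) := by
      have : Continuous (fun s : ℝ => |s| ^ q) :=
        (Real.continuous_rpow_const hq.le).comp continuous_abs
      have := this.tendsto 0
      simpa [Real.zero_rpow hq.ne'] using this
    refine (hcont.mono_left nhdsWithin_le_nhds).congr' ?_
    filter_upwards [self_mem_nhdsWithin] with s hs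
    have hs' : s ≠ 0 := hs
    simp only [slope_def_field, sub_zero, abs_zero, Real.zero_rpow hq.ne', zero_mul, mul_zero]
    rw [mul_div_assoc, div_self hs', mul_one]
  · have habs : HasDerivAt (fun s : ℝ => |s|) ((SignType.sign t : ℝ)) t := hasDerivAt_abs ht
    have hrpow : HasDerivAt (fun y : ℝ => y ^ q) (q * |t| ^ (q - 1)) |t| :=
      Real.hasDerivAt_rpow_const (Or.inl (abs_ne_zero.2 ht))
    have hcomp : HasDerivAt (fun s : ℝ => |s| ^ q)
        (q * |t| ^ (q - 1) * (SignType.sign t : ℝ)) t := hrpow.comp t habs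
    have := hcomp.mul (hasDerivAt_id t)
    refine this.congr_deriv ?_
    symm
    have hst : (SignType.sign t : ℝ) * t = |t| := by
      rcases lt_or_gt_of_ne ht with h | h
      · simp [sign_neg h, abs_of_neg h]
      · simp [sign_pos h, abs_of_pos h]
    have habspos : (0:ℝ) < |t| := abs_pos.2 ht
    have : |t| ^ (q - 1) * |t| = |t| ^ q := by
      rw [Real.rpow_sub_one habspos.ne', div_mul_cancel₀]
      exact habspos.ne'
    calc (q + 1) * |t| ^ q = q * |t| ^ q + |t| ^ q := by ring
    _ = q * |t| ^ (q - 1) * (SignType.sign t : ℝ) * t + |t| ^ q * 1 := by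
        rw [mul_assoc (q * |t| ^ (q-1)), hst, mul_assoc, this, mul_one]

private lemma phi_lipschitz {q : ℝ} (hq : 0 < q) (a b : ℝ) :
    |(|a| ^ q * a - |b| ^ q * b)| ≤ (q + 1) * (|a| + |b|) ^ q * |a - b| := by
  have hconv : Convex ℝ (Set.uIcc a b) := convex_uIcc a b
  have hbound : ∀ t ∈ Set.uIcc a b,
      ‖(q + 1) * |t| ^ q‖ ≤ (q + 1) * (|a| + |b|) ^ q := by
    intro t ht
    have htle : |t| ≤ |a| + |b| := by
      rcases Set.mem_uIcc.1 ht with ⟨h1, h2⟩ | ⟨h1, h2⟩ <;>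
      · rw [abs_le]
        constructor <;> nlinarith [abs_nonneg a, abs_nonneg b, neg_abs_le a, le_abs_self a,
          neg_abs_le b, le_abs_self b]
    have : |t| ^ q ≤ (|a| + |b|) ^ q :=
      Real.rpow_le_rpow (abs_nonneg t) htle hq.le
    have h1 : (0:ℝ) ≤ q + 1 := by linarith
    rw [Real.norm_eq_abs, abs_mul, abs_of_nonneg h1,
      abs_of_nonneg (Real.rpow_nonneg (abs_nonneg t) q)]
    exact mul_le_mul_of_nonneg_left this h1
  have := hconv.norm_image_sub_le_of_norm_hasDerivWithin_le
    (f := fun s : ℝ => |s| ^ q * s) (f' := fun t => (q + 1) * |t| ^ q)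
    (fun t _ => (hasDerivAt_phi hq t).hasDerivWithinAt) hbound
    Set.right_mem_uIcc Set.left_mem_uIcc
  simpa [Real.norm_eq_abs, mul_assoc] using this


/-- Lemma 3.3 of the paper (Bartsch–Liu): for a measure space `(Ω, μ)`, `p ≥ 2` with
conjugate exponent `p' = p/(p-1)`, and real-valued `u, v ∈ L^p(Ω, μ)`, the function
`φ_p(u) - φ_p(v)` (with `φ_p t = |t|^(p-2) t`, `φ_p 0 = 0`) belongs to `L^{p'}(Ω, μ)` and
`‖φ_p(u) - φ_p(v)‖_{p'} ≤ (p-1) ‖|u|+|v|‖_p^(p-2) ‖u-v‖_p`. -/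
theorem bartsch_liu_inequality {Ω : Type*} [MeasurableSpace Ω] (μ : Measure Ω)
    (p : ℝ) (hp : 2 ≤ p) (u v : Ω → ℝ)
    (hu : MemLp u (ENNReal.ofReal p) μ) (hv : MemLp v (ENNReal.ofReal p) μ) :
    MemLp (fun x => |u x| ^ (p - 2) * u x - |v x| ^ (p - 2) * v x)
        (ENNReal.ofReal (p / (p - 1))) μ ∧
      (eLpNorm (fun x => |u x| ^ (p - 2) * u x - |v x| ^ (p - 2) * v x)
            (ENNReal.ofReal (p / (p - 1))) μ).toReal ≤
        (p - 1) * (eLpNorm (fun x => |u x| + |v x|) (ENNReal.ofReal p) μ).toReal ^ (p - 2) *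
          (eLpNorm (u - v) (ENNReal.ofReal p) μ).toReal := by
  rcases eq_or_lt_of_le hp with hp2 | hp2
  · -- p = 2
    subst hp2
    have hF : (fun x => |u x| ^ ((2:ℝ) - 2) * u x - |v x| ^ ((2:ℝ) - 2) * v x) = u - v := by
      funext x
      norm_num
    have h21 : (2:ℝ) / (2 - 1) = 2 := by norm_num
    rw [hF, h21]
    refine ⟨hu.sub hv, ?_⟩
    norm_num
  · -- 2 < p
    have hq : (0:ℝ) < p - 2 := by linarith
    have hp0 : (0:ℝ) < p := by linarith
    have hp1 : (0:ℝ) < p - 1 := by linarith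
    set P := ENNReal.ofReal p with hP
    set P' := ENNReal.ofReal (p / (p - 1)) with hP'
    set S := ENNReal.ofReal (p / (p - 2)) with hS
    set w := fun x => |u x| + |v x| with hw
    set g := fun x => (|u x| + |v x|) ^ (p - 2) with hg
    set k := fun x => |u x - v x| with hk
    set F := fun x => |u x| ^ (p - 2) * u x - |v x| ^ (p - 2) * v x with hF
    have hwm : MemLp w P μ := by
      have := hu.norm.add hv.norm
      exact this
    have hgsm : AEStronglyMeasurable g μ := by
      have hc : Continuous (fun t : ℝ => t ^ (p - 2)) := Real.continuous_rpow_const hq.le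
      exact hc.comp_aestronglyMeasurable hwm.1
    have hksm : AEStronglyMeasurable k μ := by
      have := (hu.1.sub hv.1).norm
      simpa [Real.norm_eq_abs] using this
    have hFsm : AEStronglyMeasurable F μ := by
      have hc : Continuous (fun t : ℝ => |t| ^ (p - 2) * t) :=
        ((Real.continuous_rpow_const hq.le).comp continuous_abs).mul continuous_id
      exact (hc.comp_aestronglyMeasurable hu.1).sub (hc.comp_aestronglyMeasurable hv.1)
    -- exponent identity
    have h1 : 1 / P' = 1 / S + 1 / P := by
      rw [hP, hP', hS, one_div, one_div, one_div,
        ← ENNReal.ofReal_inv_of_pos (div_pos hp0 hp1),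
        ← ENNReal.ofReal_inv_of_pos (div_pos hp0 hq),
        ← ENNReal.ofReal_inv_of_pos hp0, inv_div, inv_div,
        ← ENNReal.ofReal_add (by positivity) (by positivity)]
      congr 1
      field_simp
      ring
    have holder : eLpNorm (fun x => g x * k x) P' μ ≤ eLpNorm g S μ * eLpNorm k P μ :=
      by
      haveI : ENNReal.HolderTriple S P P' := ⟨by simpa only [one_div] using h1.symm⟩
      simpa only [ENNReal.coe_one, one_mul] using
        eLpNorm_le_eLpNorm_mul_eLpNorm'_of_norm hgsm hksm (· * ·) 1
        (Filter.Eventually.of_forall fun x => by rw [NNReal.coe_one, one_mul]; exact norm_mul_le _ _)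
    have hgS : eLpNorm g S μ = eLpNorm w P μ ^ (p - 2) := by
      have hgeq : g = fun x => ‖w x‖ ^ (p - 2) := by
        funext x
        rw [Real.norm_eq_abs, abs_of_nonneg (by positivity)]
      rw [hgeq, eLpNorm_norm_rpow w hq]
      congr 1
      rw [hS, hP, ← ENNReal.ofReal_mul (le_of_lt (div_pos hp0 hq))]
      congr 1
      field_simp
    have hkP : eLpNorm k P μ = eLpNorm (u - v) P μ := by
      have : k = fun x => ‖(u - v) x‖ := by
        funext x
        simp [Real.norm_eq_abs, hk]
      rw [this, eLpNorm_norm]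
    have hpt : ∀ x, ‖F x‖ ≤ ‖(p - 1) * (g x * k x)‖ := by
      intro x
      have h := phi_lipschitz hq (u x) (v x)
      have hgk0 : (0:ℝ) ≤ g x * k x :=
        mul_nonneg (Real.rpow_nonneg (by positivity) _) (abs_nonneg _)
      calc ‖F x‖ = |F x| := Real.norm_eq_abs _
        _ ≤ ((p - 2) + 1) * (|u x| + |v x|) ^ (p - 2) * |u x - v x| := h
        _ = (p - 1) * (g x * k x) := by rw [hg, hk]; ring
        _ = ‖(p - 1) * (g x * k x)‖ :=
            (Real.norm_of_nonneg (mul_nonneg hp1.le hgk0)).symm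
    have hmono : eLpNorm F P' μ ≤ eLpNorm (fun x => (p - 1) * (g x * k x)) P' μ :=
      eLpNorm_mono hpt
    have hsmul : eLpNorm (fun x => (p - 1) * (g x * k x)) P' μ =
        ENNReal.ofReal (p - 1) * eLpNorm (fun x => g x * k x) P' μ := by
      have heq : (fun x => (p - 1) * (g x * k x)) = (p - 1 : ℝ) • (fun x => g x * k x) := by
        funext x
        simp [smul_eq_mul]
      rw [heq, eLpNorm_const_smul]
      congr 1
      rw [← ofReal_norm, Real.norm_of_nonneg hp1.le]
    have chain : eLpNorm F P' μ ≤
        ENNReal.ofReal (p - 1) * (eLpNorm w P μ ^ (p - 2) * eLpNorm (u - v) P μ) := by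
      refine hmono.trans ?_
      rw [hsmul]
      refine mul_le_mul_right (holder.trans_eq ?_) _
      rw [hgS, hkP]
    have hwfin : eLpNorm w P μ ≠ ⊤ := hwm.eLpNorm_ne_top
    have huvfin : eLpNorm (u - v) P μ ≠ ⊤ := (hu.sub hv).eLpNorm_ne_top
    have hRfin : ENNReal.ofReal (p - 1) *
        (eLpNorm w P μ ^ (p - 2) * eLpNorm (u - v) P μ) ≠ ⊤ := by
      apply ENNReal.mul_ne_top ENNReal.ofReal_ne_top
      exact ENNReal.mul_ne_top
        (ENNReal.rpow_lt_top_of_nonneg hq.le hwfin).ne huvfin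
    refine ⟨⟨hFsm, lt_of_le_of_lt chain hRfin.lt_top⟩, ?_⟩
    have htr := ENNReal.toReal_mono hRfin chain
    refine htr.trans (le_of_eq ?_)
    rw [ENNReal.toReal_mul, ENNReal.toReal_mul, ENNReal.toReal_ofReal hp1.le,
      ← ENNReal.toReal_rpow, mul_assoc]
end

section
/- Let (Ω, μ) be a measure space, N ≥ 1, and 1 < p ≤ 2. Then there exists a constant C > 0, depending only on p, such that for all F, G ∈ L^p(Ω, μ; ℝ^N), not both equal to 0 almost everywhere, one has ∫_Ω (φ_p(F(x)) − φ_p(G(x))) · (F(x) − G(x)) dμ(x) ≥ C (‖F‖_{L^p} + ‖G‖_{L^p})^{p−2} ‖F − G‖_{L^p}^2, where the integrand is nonnegative and integrable. -/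
open MeasureTheory
open scoped RealInnerProductSpace ENNReal NNReal


private lemma vfi_rpow_shift {s : ℝ} (hs : 0 ≤ s) {q : ℝ} (hq : q + 1 ≠ 0) :
    s ^ q * s = s ^ (q + 1) := by
  rcases eq_or_lt_of_le hs with h | h
  · rw [← h, Real.zero_rpow hq, mul_zero]
  · rw [Real.rpow_add h, Real.rpow_one]

private lemma vfi_rpow_shift2 {s : ℝ} (hs : 0 ≤ s) {q : ℝ} (hq : q + 2 ≠ 0) :
    s ^ q * s ^ 2 = s ^ (q + 2) := by
  rcases eq_or_lt_of_le hs with h | h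
  · rw [← h, Real.zero_rpow hq]; ring
  · rw [Real.rpow_add h, show s ^ (2:ℝ) = s ^ 2 from Real.rpow_two s ▸ rfl]

private lemma vfi_tangent {q s t : ℝ} (hq0 : 0 < q) (hq1 : q ≤ 1) (ht : 0 ≤ t) (hts : t ≤ s) :
    q * (s ^ (q - 1) * (s - t)) ≤ s ^ q - t ^ q := by
  rcases eq_or_lt_of_le (ht.trans hts) with hs | hs
  · have hs0 : s = 0 := hs.symm
    have ht0 : t = 0 := le_antisymm (hs0 ▸ hts) ht
    simp [hs0, ht0]
  · have hb : (1 + (t / s - 1)) ^ q ≤ 1 + q * (t / s - 1) :=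
      rpow_one_add_le_one_add_mul_self
        (by have : 0 ≤ t / s := div_nonneg ht hs.le; linarith) hq0.le hq1
    have h1 : (t / s) ^ q ≤ 1 + q * (t / s - 1) := by
      have : 1 + (t / s - 1) = t / s := by ring
      rwa [this] at hb
    have h2 : (t / s) ^ q = t ^ q / s ^ q := Real.div_rpow ht hs.le q
    have hsq : 0 < s ^ q := Real.rpow_pos_of_pos hs q
    have h3 : t ^ q ≤ s ^ q + q * s ^ q * (t / s - 1) := by
      have := mul_le_mul_of_nonneg_right h1 hsq.le
      rw [h2, div_mul_cancel₀ _ hsq.ne'] at this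
      linarith [this]
    have h4 : s ^ q * (t / s - 1) = s ^ (q - 1) * (t - s) := by
      have e : s ^ (q - 1) * s = s ^ q := by
        have := vfi_rpow_shift hs.le (q := q - 1) (by intro h; rw [show q - 1 + 1 = q by ring] at h; exact hq0.ne' h)
        rwa [show q - 1 + 1 = q by ring] at this
      field_simp
      nlinarith [e]
    nlinarith [h3, h4]

private lemma vfi_subadd {s t q : ℝ} (hs : 0 ≤ s) (ht : 0 ≤ t) (hq0 : 0 ≤ q) (hq1 : q ≤ 1) :
    (s + t) ^ q ≤ s ^ q + t ^ q := by
  have h := NNReal.rpow_add_le_add_rpow s.toNNReal t.toNNReal hq0 hq1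
  have h2 := NNReal.coe_le_coe.2 h
  push_cast at h2
  rwa [Real.coe_toNNReal _ hs, Real.coe_toNNReal _ ht] at h2

private lemma vfi_affine {c0 c1 x m : ℝ} (h1 : 0 ≤ c0 - c1 * m) (h2 : 0 ≤ c0 + c1 * m)
    (hx1 : -m ≤ x) (hx2 : x ≤ m) : 0 ≤ c0 - c1 * x := by
  rcases le_total 0 c1 with h | h
  · nlinarith
  · nlinarith

private lemma vfi_key_scalar_aux {p : ℝ} (hp1 : 1 < p) (hp2 : p ≤ 2)
    {s t x : ℝ} (ht : 0 ≤ t) (hts : t ≤ s) (hx : |x| ≤ s * t) :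
    (p - 1) * (s + t) ^ (p - 2) * (s ^ 2 + t ^ 2 - 2 * x) ≤
      s ^ p + t ^ p - (s ^ (p - 2) + t ^ (p - 2)) * x := by
  have hs : 0 ≤ s := ht.trans hts
  have hp0 : (0:ℝ) < p - 1 := by linarith
  rcases eq_or_lt_of_le ht with ht0 | ht0
  · -- t = 0, hence x = 0
    have hteq : t = 0 := ht0.symm
    have hx0 : x = 0 := by
      rw [hteq, mul_zero] at hx; exact abs_eq_zero.mp (le_antisymm hx (abs_nonneg x))
    subst hteq; subst hx0
    have h0p : (0:ℝ) ^ p = 0 := Real.zero_rpow (by linarith)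
    have e1 : s ^ (p - 2) * s ^ 2 = s ^ p := by
      have := vfi_rpow_shift2 hs (q := p - 2) (by intro h; nlinarith [h])
      rwa [show p - 2 + 2 = p by ring] at this
    have hsp : 0 ≤ s ^ p := Real.rpow_nonneg hs p
    rw [add_zero, mul_zero, sub_zero, h0p]
    nlinarith [e1, hsp]
  · -- 0 < t ≤ s
    have hs0 : 0 < s := lt_of_lt_of_le ht0 hts
    have hst : 0 < s + t := by linarith
    -- rpow shift equalities
    have es1 : s ^ (p - 2) * s = s ^ (p - 1) := by
      have := vfi_rpow_shift hs (q := p - 2) (by intro h; nlinarith)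
      rwa [show p - 2 + 1 = p - 1 by ring] at this
    have et1 : t ^ (p - 2) * t = t ^ (p - 1) := by
      have := vfi_rpow_shift ht (q := p - 2) (by intro h; nlinarith)
      rwa [show p - 2 + 1 = p - 1 by ring] at this
    have es2 : s ^ (p - 1) * s = s ^ p := by
      have := vfi_rpow_shift hs (q := p - 1) (by intro h; nlinarith)
      rwa [show p - 1 + 1 = p by ring] at this
    have et2 : t ^ (p - 1) * t = t ^ p := by
      have := vfi_rpow_shift ht (q := p - 1) (by intro h; nlinarith)
      rwa [show p - 1 + 1 = p by ring] at this
    have est1 : (s + t) ^ (p - 2) * (s + t) = (s + t) ^ (p - 1) := by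
      have := vfi_rpow_shift hst.le (q := p - 2) (by intro h; nlinarith)
      rwa [show p - 2 + 1 = p - 1 by ring] at this
    -- monotonicity in base with nonpositive exponent
    have hmono : (s + t) ^ (p - 2) ≤ s ^ (p - 2) :=
      Real.rpow_le_rpow_of_nonpos hs0 (by linarith) (by linarith)
    -- tangent line inequality
    have htan := vfi_tangent (q := p - 1) hp0 (by linarith) ht hts
    rw [show p - 1 - 1 = p - 2 by ring] at htan
    -- endpoint x = s*t
    have hE1 : (p - 1) * (s + t) ^ (p - 2) * (s - t) ^ 2 ≤
        s ^ p + t ^ p - (s ^ (p - 2) + t ^ (p - 2)) * (s * t) := by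
      have hM : (p - 1) * ((s + t) ^ (p - 2) * (s - t)) ≤ s ^ (p - 1) - t ^ (p - 1) := by
        have h1 : (p - 1) * ((s + t) ^ (p - 2) * (s - t)) ≤ (p - 1) * (s ^ (p - 2) * (s - t)) := by
          have := mul_le_mul_of_nonneg_right hmono (show (0:ℝ) ≤ s - t by linarith)
          nlinarith
        exact h1.trans htan
      nlinarith [mul_le_mul_of_nonneg_right hM (show (0:ℝ) ≤ s - t by linarith), es1, et1, es2, et2]
    -- endpoint x = -(s*t)
    have hE2 : (p - 1) * (s + t) ^ (p - 2) * (s + t) ^ 2 ≤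
        s ^ p + t ^ p + (s ^ (p - 2) + t ^ (p - 2)) * (s * t) := by
      have hsub : (s + t) ^ (p - 1) ≤ s ^ (p - 1) + t ^ (p - 1) :=
        vfi_subadd hs ht (by linarith) (by linarith)
      have hnn : 0 ≤ (s + t) ^ (p - 1) := Real.rpow_nonneg hst.le _
      have h1 : (p - 1) * (s + t) ^ (p - 1) ≤ s ^ (p - 1) + t ^ (p - 1) := by
        nlinarith
      have key := mul_le_mul_of_nonneg_right h1 hst.le
      have lhs_eq : (p - 1) * (s + t) ^ (p - 2) * (s + t) ^ 2
          = (p - 1) * (s + t) ^ (p - 1) * (s + t) := by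
        rw [← est1]; ring
      have rhs_eq : (s ^ (p - 1) + t ^ (p - 1)) * (s + t)
          = s ^ p + t ^ p + (s ^ (p - 2) + t ^ (p - 2)) * (s * t) := by
        linear_combination es2 + et2 - t * es1 - s * et1
      rw [lhs_eq]
      exact key.trans rhs_eq.le
    -- affine interpolation in x
    obtain ⟨hxl, hxr⟩ := abs_le.mp hx
    have goal_eq : s ^ p + t ^ p - (s ^ (p - 2) + t ^ (p - 2)) * x
        - (p - 1) * (s + t) ^ (p - 2) * (s ^ 2 + t ^ 2 - 2 * x)
        = (s ^ p + t ^ p - (p - 1) * (s + t) ^ (p - 2) * (s ^ 2 + t ^ 2))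
          - (s ^ (p - 2) + t ^ (p - 2) - 2 * ((p - 1) * (s + t) ^ (p - 2))) * x := by ring
    have e1 : (s ^ p + t ^ p - (p - 1) * (s + t) ^ (p - 2) * (s ^ 2 + t ^ 2))
          - (s ^ (p - 2) + t ^ (p - 2) - 2 * ((p - 1) * (s + t) ^ (p - 2))) * (s * t)
        = (s ^ p + t ^ p - (s ^ (p - 2) + t ^ (p - 2)) * (s * t))
          - (p - 1) * (s + t) ^ (p - 2) * (s - t) ^ 2 := by ring
    have e2 : (s ^ p + t ^ p - (p - 1) * (s + t) ^ (p - 2) * (s ^ 2 + t ^ 2))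
          + (s ^ (p - 2) + t ^ (p - 2) - 2 * ((p - 1) * (s + t) ^ (p - 2))) * (s * t)
        = (s ^ p + t ^ p + (s ^ (p - 2) + t ^ (p - 2)) * (s * t))
          - (p - 1) * (s + t) ^ (p - 2) * (s + t) ^ 2 := by ring
    have hA1 : 0 ≤ (s ^ p + t ^ p - (p - 1) * (s + t) ^ (p - 2) * (s ^ 2 + t ^ 2))
          - (s ^ (p - 2) + t ^ (p - 2) - 2 * ((p - 1) * (s + t) ^ (p - 2))) * (s * t) := by
      rw [e1]; linarith [hE1]
    have hA2 : 0 ≤ (s ^ p + t ^ p - (p - 1) * (s + t) ^ (p - 2) * (s ^ 2 + t ^ 2))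
          + (s ^ (p - 2) + t ^ (p - 2) - 2 * ((p - 1) * (s + t) ^ (p - 2))) * (s * t) := by
      rw [e2]; linarith [hE2]
    have interp := vfi_affine hA1 hA2 hxl hxr
    linarith [goal_eq, interp]

private lemma vfi_key_scalar {p : ℝ} (hp1 : 1 < p) (hp2 : p ≤ 2)
    {s t x : ℝ} (hs : 0 ≤ s) (ht : 0 ≤ t) (hx : |x| ≤ s * t) :
    (p - 1) * (s + t) ^ (p - 2) * (s ^ 2 + t ^ 2 - 2 * x) ≤
      s ^ p + t ^ p - (s ^ (p - 2) + t ^ (p - 2)) * x := by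
  rcases le_total t s with h | h
  · exact vfi_key_scalar_aux hp1 hp2 ht h hx
  · have := vfi_key_scalar_aux hp1 hp2 hs h (by rwa [mul_comm])
    have e : t + s = s + t := by ring
    rw [e] at this
    linarith [this]

private lemma vfi_pointwise {p : ℝ} (hp1 : 1 < p) (hp2 : p ≤ 2)
    {E : Type*} [NormedAddCommGroup E] [InnerProductSpace ℝ E] (a b : E) :
    (p - 1) * ((‖a‖ + ‖b‖) ^ (p - 2) * ‖a - b‖ ^ 2) ≤
      ⟪(‖a‖ ^ (p - 2)) • a - (‖b‖ ^ (p - 2)) • b, a - b⟫ := by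
  have hx : |⟪a, b⟫| ≤ ‖a‖ * ‖b‖ := abs_real_inner_le_norm a b
  have key := vfi_key_scalar hp1 hp2 (norm_nonneg a) (norm_nonneg b) hx
  have ea : ‖a‖ ^ (p - 2) * ‖a‖ ^ 2 = ‖a‖ ^ p := by
    have := vfi_rpow_shift2 (norm_nonneg a) (q := p - 2) (by intro h; nlinarith)
    rwa [show p - 2 + 2 = p by ring] at this
  have eb : ‖b‖ ^ (p - 2) * ‖b‖ ^ 2 = ‖b‖ ^ p := by
    have := vfi_rpow_shift2 (norm_nonneg b) (q := p - 2) (by intro h; nlinarith)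
    rwa [show p - 2 + 2 = p by ring] at this
  have expand1 : ⟪(‖a‖ ^ (p - 2)) • a - (‖b‖ ^ (p - 2)) • b, a - b⟫
      = ‖a‖ ^ p + ‖b‖ ^ p - (‖a‖ ^ (p - 2) + ‖b‖ ^ (p - 2)) * ⟪a, b⟫ := by
    simp only [inner_sub_left, inner_sub_right, real_inner_smul_left,
      real_inner_self_eq_norm_sq, real_inner_comm b a]
    linear_combination ea + eb
  have expand2 : ‖a - b‖ ^ 2 = ‖a‖ ^ 2 + ‖b‖ ^ 2 - 2 * ⟪a, b⟫ := by
    rw [norm_sub_sq_real]; ring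
  rw [expand1, expand2]
  calc (p - 1) * ((‖a‖ + ‖b‖) ^ (p - 2) * (‖a‖ ^ 2 + ‖b‖ ^ 2 - 2 * ⟪a, b⟫))
      = (p - 1) * (‖a‖ + ‖b‖) ^ (p - 2) * (‖a‖ ^ 2 + ‖b‖ ^ 2 - 2 * ⟪a, b⟫) := by ring
    _ ≤ _ := key

/-- Case `p ≤ 2` of inequality (3.5) of the paper: for `1 < p ≤ 2` there is a constant
`C > 0`, depending only on `p`, such that for every measure space `(Ω, μ)`, every `N ≥ 1`,
and all `F, G ∈ L^p(Ω, μ; ℝ^N)` not both `0` a.e., the integrand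
`(φ_p(F) - φ_p(G)) · (F - G)` (with `φ_p ξ = |ξ|^(p-2) ξ`, `φ_p 0 = 0`) is a.e. nonnegative
and integrable, and
`∫ (φ_p(F) - φ_p(G)) · (F - G) dμ ≥ C (‖F‖_p + ‖G‖_p)^(p-2) ‖F - G‖_p²`. -/
theorem vector_field_inequality_p_le_two (p : ℝ) (hp1 : 1 < p) (hp2 : p ≤ 2) :
    ∃ C : ℝ, 0 < C ∧
      ∀ (Ω : Type) [MeasurableSpace Ω], ∀ (μ : Measure Ω) (N : ℕ), 1 ≤ N →
        ∀ F G : Ω → EuclideanSpace ℝ (Fin N),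
          MemLp F (ENNReal.ofReal p) μ → MemLp G (ENNReal.ofReal p) μ →
          ¬ (F =ᵐ[μ] 0 ∧ G =ᵐ[μ] 0) →
          (∀ᵐ x ∂μ,
            0 ≤ ⟪(‖F x‖ ^ (p - 2)) • F x - (‖G x‖ ^ (p - 2)) • G x, F x - G x⟫) ∧
          Integrable
            (fun x => ⟪(‖F x‖ ^ (p - 2)) • F x - (‖G x‖ ^ (p - 2)) • G x, F x - G x⟫) μ ∧
          C * ((eLpNorm F (ENNReal.ofReal p) μ).toReal +
                (eLpNorm G (ENNReal.ofReal p) μ).toReal) ^ (p - 2) *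
              (eLpNorm (F - G) (ENNReal.ofReal p) μ).toReal ^ 2 ≤
            ∫ x, ⟪(‖F x‖ ^ (p - 2)) • F x - (‖G x‖ ^ (p - 2)) • G x, F x - G x⟫ ∂μ := by
  have hp0 : (0:ℝ) < p := by linarith
  refine ⟨p - 1, by linarith, ?_⟩
  intro Ω _ μ N _ F G hF hG _
  set q : ℝ≥0∞ := ENNReal.ofReal p with hq_def
  have hq_toReal : q.toReal = p := ENNReal.toReal_ofReal hp0.le
  have hq0 : q ≠ 0 := by simp [hq_def, ENNReal.ofReal_eq_zero, not_le, hp0]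
  have hqt : q ≠ ∞ := ENNReal.ofReal_ne_top
  have hq1 : 1 ≤ q := by
    rw [hq_def, show (1:ℝ≥0∞) = ENNReal.ofReal 1 by simp]
    exact ENNReal.ofReal_le_ofReal (by linarith)
  have hFm : AEStronglyMeasurable F μ := hF.aestronglyMeasurable
  have hGm : AEStronglyMeasurable G μ := hG.aestronglyMeasurable
  set H : Ω → ℝ := fun x => ⟪(‖F x‖ ^ (p - 2)) • F x - (‖G x‖ ^ (p - 2)) • G x, F x - G x⟫
    with hH_def
  set Kr : Ω → ℝ := fun x => (‖F x‖ + ‖G x‖) ^ (p - 2) * ‖F x - G x‖ ^ 2 with hKr_def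
  have hHK : ∀ x, (p - 1) * Kr x ≤ H x := fun x => vfi_pointwise hp1 hp2 (F x) (G x)
  have hK0 : ∀ x, 0 ≤ Kr x := fun x =>
    mul_nonneg (Real.rpow_nonneg (by positivity) _) (by positivity)
  have hH0 : ∀ x, 0 ≤ H x := fun x => le_trans (by nlinarith [hK0 x, hp1]) (hHK x)
  -- measurability
  have hHm : AEStronglyMeasurable H μ := by
    apply AEStronglyMeasurable.inner
    · exact AEStronglyMeasurable.sub
        (((hFm.norm.aemeasurable.pow_const (p - 2)).aestronglyMeasurable).smul hFm)
        (((hGm.norm.aemeasurable.pow_const (p - 2)).aestronglyMeasurable).smul hGm)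
    · exact hFm.sub hGm
  have hKrm : AEStronglyMeasurable Kr μ := by
    apply AEStronglyMeasurable.mul
    · exact ((hFm.norm.add hGm.norm).aemeasurable.pow_const (p - 2)).aestronglyMeasurable
    · exact (hFm.sub hGm).norm.mul (hFm.sub hGm).norm |>.congr
        (Filter.Eventually.of_forall fun x => by simp [sq])
  -- the L^p dominating function
  have hsum : MemLp (fun x => ‖F x‖ + ‖G x‖) q μ := hF.norm.add hG.norm
  have hsum_int : Integrable (fun x => (‖F x‖ + ‖G x‖) ^ p) μ := by
    have := hsum.integrable_norm_rpow hq0 hqt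
    rw [hq_toReal] at this
    refine this.congr (Filter.Eventually.of_forall fun x => ?_)
    show ‖‖F x‖ + ‖G x‖‖ ^ p = (‖F x‖ + ‖G x‖) ^ p
    rw [Real.norm_of_nonneg (by positivity)]
  have hHbound : ∀ x, ‖H x‖ ≤ 2 * (‖F x‖ + ‖G x‖) ^ p := by
    intro x
    have habs : ‖H x‖ ≤ ‖(‖F x‖ ^ (p - 2)) • F x - (‖G x‖ ^ (p - 2)) • G x‖ * ‖F x - G x‖ := by
      rw [Real.norm_eq_abs]
      exact abs_real_inner_le_norm _ _
    have hw : ‖(‖F x‖ ^ (p - 2)) • F x - (‖G x‖ ^ (p - 2)) • G x‖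
        ≤ ‖F x‖ ^ (p - 1) + ‖G x‖ ^ (p - 1) := by
      have h1 : ‖(‖F x‖ ^ (p - 2)) • F x‖ = ‖F x‖ ^ (p - 1) := by
        rw [norm_smul, Real.norm_eq_abs, abs_of_nonneg (Real.rpow_nonneg (norm_nonneg _) _)]
        have := vfi_rpow_shift (norm_nonneg (F x)) (q := p - 2) (by intro h; nlinarith)
        rwa [show p - 2 + 1 = p - 1 by ring] at this
      have h2 : ‖(‖G x‖ ^ (p - 2)) • G x‖ = ‖G x‖ ^ (p - 1) := by
        rw [norm_smul, Real.norm_eq_abs, abs_of_nonneg (Real.rpow_nonneg (norm_nonneg _) _)]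
        have := vfi_rpow_shift (norm_nonneg (G x)) (q := p - 2) (by intro h; nlinarith)
        rwa [show p - 2 + 1 = p - 1 by ring] at this
      calc ‖(‖F x‖ ^ (p - 2)) • F x - (‖G x‖ ^ (p - 2)) • G x‖
          ≤ ‖(‖F x‖ ^ (p - 2)) • F x‖ + ‖(‖G x‖ ^ (p - 2)) • G x‖ := norm_sub_le _ _
        _ = ‖F x‖ ^ (p - 1) + ‖G x‖ ^ (p - 1) := by rw [h1, h2]
    have hz : ‖F x - G x‖ ≤ ‖F x‖ + ‖G x‖ := norm_sub_le _ _
    have hm1 : ‖F x‖ ^ (p - 1) ≤ (‖F x‖ + ‖G x‖) ^ (p - 1) :=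
      Real.rpow_le_rpow (norm_nonneg _) (by linarith [norm_nonneg (G x)]) (by linarith)
    have hm2 : ‖G x‖ ^ (p - 1) ≤ (‖F x‖ + ‖G x‖) ^ (p - 1) :=
      Real.rpow_le_rpow (norm_nonneg _) (by linarith [norm_nonneg (F x)]) (by linarith)
    have hshift : (‖F x‖ + ‖G x‖) ^ (p - 1) * (‖F x‖ + ‖G x‖) = (‖F x‖ + ‖G x‖) ^ p := by
      have := vfi_rpow_shift (by positivity : (0:ℝ) ≤ ‖F x‖ + ‖G x‖) (q := p - 1)
        (by intro h; nlinarith)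
      rwa [show p - 1 + 1 = p by ring] at this
    have hwnn : (0:ℝ) ≤ ‖F x‖ ^ (p - 1) + ‖G x‖ ^ (p - 1) := by positivity
    have hznn : (0:ℝ) ≤ ‖F x - G x‖ := norm_nonneg _
    have hchain : ‖(‖F x‖ ^ (p - 2)) • F x - (‖G x‖ ^ (p - 2)) • G x‖ * ‖F x - G x‖
        ≤ (‖F x‖ ^ (p - 1) + ‖G x‖ ^ (p - 1)) * (‖F x‖ + ‖G x‖) :=
      mul_le_mul hw hz hznn hwnn
    have hchain2 : (‖F x‖ ^ (p - 1) + ‖G x‖ ^ (p - 1)) * (‖F x‖ + ‖G x‖)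
        ≤ 2 * (‖F x‖ + ‖G x‖) ^ (p - 1) * (‖F x‖ + ‖G x‖) := by
      have : (0:ℝ) ≤ ‖F x‖ + ‖G x‖ := by positivity
      nlinarith
    calc ‖H x‖ ≤ _ := habs
      _ ≤ _ := hchain
      _ ≤ 2 * (‖F x‖ + ‖G x‖) ^ (p - 1) * (‖F x‖ + ‖G x‖) := hchain2
      _ = 2 * (‖F x‖ + ‖G x‖) ^ p := by rw [mul_assoc, hshift]
  have hHint : Integrable H μ := by
    refine Integrable.mono' (hsum_int.const_mul 2) hHm
      (Filter.Eventually.of_forall fun x => hHbound x)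
  have hKrint : Integrable Kr μ := by
    refine Integrable.mono' (hHint.const_mul (p - 1)⁻¹) hKrm
      (Filter.Eventually.of_forall fun x => ?_)
    rw [Real.norm_of_nonneg (hK0 x)]
    rw [le_inv_mul_iff₀ (by linarith : (0:ℝ) < p - 1)]
    linarith [hHK x]
  refine ⟨Filter.Eventually.of_forall hH0, hHint, ?_⟩
  -- main inequality
  set a : ℝ := (eLpNorm (F - G) q μ).toReal with ha_def
  set b : ℝ := (eLpNorm F q μ).toReal + (eLpNorm G q μ).toReal with hb_def
  set k : ℝ := ∫ x, Kr x ∂μ with hk_def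
  have hk0 : 0 ≤ k := integral_nonneg hK0
  have hstep : (p - 1) * k ≤ ∫ x, H x ∂μ := by
    have := integral_mono (hKrint.const_mul (p - 1)) hHint hHK
    rwa [integral_const_mul] at this
  have hcore : b ^ (p - 2) * a ^ 2 ≤ k := by
    -- ENNReal-valued auxiliary functions
    set U : Ω → ℝ≥0∞ := fun x => (‖F x - G x‖₊ : ℝ≥0∞) with hU_def
    set W : Ω → ℝ≥0∞ := fun x => (‖(‖F x‖ + ‖G x‖ : ℝ)‖₊ : ℝ≥0∞) with hW_def
    have hWofReal : ∀ x, W x = ENNReal.ofReal (‖F x‖ + ‖G x‖) := fun x =>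
      Real.enorm_eq_ofReal (by positivity)
    have hUofReal : ∀ x, U x = ENNReal.ofReal ‖F x - G x‖ :=
      fun x => (ofReal_norm _).symm
    have hUW : ∀ x, W x = 0 → U x = 0 := by
      intro x hw
      rw [hWofReal x] at hw
      have h0 : ¬ (0 < ‖F x‖ + ‖G x‖) := fun h => (ENNReal.ofReal_pos.2 h).ne' hw
      push_neg at h0
      have hF0 : F x = 0 := norm_le_zero_iff.1 (by linarith [norm_nonneg (G x)])
      have hG0 : G x = 0 := norm_le_zero_iff.1 (by linarith [norm_nonneg (F x)])
      simp [hU_def, hF0, hG0]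
    set IU : ℝ≥0∞ := ∫⁻ x, U x ^ p ∂μ with hIU_def
    set IW : ℝ≥0∞ := ∫⁻ x, W x ^ p ∂μ with hIW_def
    set IK : ℝ≥0∞ := ∫⁻ x, U x ^ (2:ℝ) * W x ^ (p - 2) ∂μ with hIK_def
    have hUm : AEMeasurable U μ := (hFm.sub hGm).enorm
    have hWm : AEMeasurable W μ := (hFm.norm.add hGm.norm).enorm
    -- eLpNorm identifications
    have hf1 : eLpNorm (F - G) q μ = IU ^ (1 / p) := by
      rw [eLpNorm_eq_lintegral_rpow_enorm_toReal hq0 hqt, hq_toReal]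
      congr 1
    have hfW : eLpNorm (fun x => ‖F x‖ + ‖G x‖) q μ = IW ^ (1 / p) := by
      rw [eLpNorm_eq_lintegral_rpow_enorm_toReal hq0 hqt, hq_toReal]
      rfl
    have hIU_ne : IU ≠ ∞ := by
      have h := (hF.sub hG).eLpNorm_lt_top
      rw [hf1] at h
      have he : IU = (IU ^ (1 / p)) ^ p := by
        rw [← ENNReal.rpow_mul, one_div, inv_mul_cancel₀ (ne_of_gt hp0), ENNReal.rpow_one]
      rw [he]
      exact (ENNReal.rpow_lt_top_of_nonneg hp0.le h.ne).ne
    have hIW_ne : IW ≠ ∞ := by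
      have h := hsum.eLpNorm_lt_top
      rw [hfW] at h
      have he : IW = (IW ^ (1 / p)) ^ p := by
        rw [← ENNReal.rpow_mul, one_div, inv_mul_cancel₀ (ne_of_gt hp0), ENNReal.rpow_one]
      rw [he]
      exact (ENNReal.rpow_lt_top_of_nonneg hp0.le h.ne).ne
    -- IK is the ofReal of k
    have hKae : ∀ x, ENNReal.ofReal (Kr x) = U x ^ (2:ℝ) * W x ^ (p - 2) := by
      intro x
      by_cases hw : W x = 0
      · have hu := hUW x hw
        rw [hWofReal x] at hw
        have h0 : ¬ (0 < ‖F x‖ + ‖G x‖) := fun h => (ENNReal.ofReal_pos.2 h).ne' hw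
        push_neg at h0
        have hF0 : F x = 0 := norm_le_zero_iff.1 (by linarith [norm_nonneg (G x)])
        have hG0 : G x = 0 := norm_le_zero_iff.1 (by linarith [norm_nonneg (F x)])
        rw [hu, ENNReal.zero_rpow_of_pos (by norm_num : (0:ℝ) < 2), zero_mul]
        rw [hKr_def]
        simp [hF0, hG0]
      · have hwpos : 0 < ‖F x‖ + ‖G x‖ := by
          rcases lt_or_eq_of_le (by positivity : (0:ℝ) ≤ ‖F x‖ + ‖G x‖) with h | h
          · exact h
          · exact absurd (by rw [hWofReal x, ← h, ENNReal.ofReal_zero]) hw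
        rw [hKr_def]
        simp only
        rw [ENNReal.ofReal_mul (Real.rpow_nonneg hwpos.le _)]
        rw [← ENNReal.ofReal_rpow_of_pos hwpos]
        rw [ENNReal.ofReal_pow (norm_nonneg _)]
        rw [← hWofReal x, ← hUofReal x, ← ENNReal.rpow_natCast (U x) 2]
        norm_num [mul_comm]
    have hIK_eq : IK = ENNReal.ofReal k := by
      rw [hk_def, ofReal_integral_eq_lintegral_ofReal hKrint (Filter.Eventually.of_forall hK0)]
      exact (lintegral_congr fun x => hKae x).symm
    have hIK_ne : IK ≠ ∞ := by rw [hIK_eq]; exact ENNReal.ofReal_ne_top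
    -- Hölder inequality
    have hHolder : IU ≤ IK ^ (p / 2) * IW ^ ((2 - p) / 2) := by
      rcases eq_or_lt_of_le hp2 with hp2e | hp2lt
      · -- p = 2
        subst hp2e
        simp only [show (2:ℝ) - 2 = 0 by norm_num, zero_div, ENNReal.rpow_zero, mul_one,
          show (2:ℝ) / 2 = 1 by norm_num, ENNReal.rpow_one]
        apply le_of_eq
        apply lintegral_congr
        intro x
        norm_num
      · have hp2ne : (2:ℝ) - p ≠ 0 := by linarith
        have hpq : Real.HolderConjugate (2 / p) (2 / (2 - p)) := by
          constructor
          · rw [inv_div, inv_div, ← add_div]; ring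
          · positivity
          · exact div_pos (by norm_num) (by linarith)
        set f : Ω → ℝ≥0∞ := fun x => (U x ^ (2:ℝ) * W x ^ (p - 2)) ^ (p / 2) with hf_def
        set g : Ω → ℝ≥0∞ := fun x => (W x ^ p) ^ ((2 - p) / 2) with hg_def
        have hfm : AEMeasurable f μ := ((hUm.pow_const _).mul (hWm.pow_const _)).pow_const _
        have hgm : AEMeasurable g μ := (hWm.pow_const _).pow_const _
        have hHo := ENNReal.lintegral_mul_le_Lp_mul_Lq μ hpq hfm hgm
        have hfg : ∀ x, (f * g) x = U x ^ p := by
          intro x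
          by_cases hw : W x = 0
          · have hu := hUW x hw
            simp only [Pi.mul_apply, hf_def, hg_def, hw, hu]
            rw [ENNReal.zero_rpow_of_pos (by norm_num : (0:ℝ) < 2), zero_mul,
              ENNReal.zero_rpow_of_pos (by positivity : (0:ℝ) < p / 2),
              ENNReal.zero_rpow_of_pos hp0, zero_mul]
          · have hwt : W x ≠ ∞ := by rw [hWofReal x]; exact ENNReal.ofReal_ne_top
            simp only [Pi.mul_apply, hf_def, hg_def]
            rw [ENNReal.mul_rpow_of_nonneg _ _ (by positivity : (0:ℝ) ≤ p / 2),
              ← ENNReal.rpow_mul, ← ENNReal.rpow_mul, ← ENNReal.rpow_mul,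
              show (2:ℝ) * (p / 2) = p by ring, mul_assoc,
              ← ENNReal.rpow_add _ _ hw hwt,
              show (p - 2) * (p / 2) + p * ((2 - p) / 2) = 0 by ring,
              ENNReal.rpow_zero, mul_one]
        have e1 : ∫⁻ x, (f * g) x ∂μ = IU := lintegral_congr hfg
        have e2 : ∫⁻ x, f x ^ (2 / p) ∂μ = IK := by
          apply lintegral_congr
          intro x
          rw [hf_def]
          simp only
          rw [← ENNReal.rpow_mul,
            show (p / 2) * (2 / p) = 1 by field_simp, ENNReal.rpow_one]
        have e3 : ∫⁻ x, g x ^ (2 / (2 - p)) ∂μ = IW := by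
          apply lintegral_congr
          intro x
          rw [hg_def]
          simp only
          rw [← ENNReal.rpow_mul,
            show ((2 - p) / 2) * (2 / (2 - p)) = 1 by field_simp, ENNReal.rpow_one]
        rw [e1, e2, e3, one_div_div, one_div_div] at hHo
        exact hHo
    -- convert to real numbers
    have ha0 : 0 ≤ a := ENNReal.toReal_nonneg
    have hb0 : 0 ≤ b := add_nonneg ENNReal.toReal_nonneg ENNReal.toReal_nonneg
    set T : ℝ := IW.toReal with hT_def
    have hT0 : 0 ≤ T := ENNReal.toReal_nonneg
    have r1 : IU.toReal = a ^ p := by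
      rw [ha_def, hf1, ENNReal.toReal_rpow, ← ENNReal.rpow_mul, one_div,
        inv_mul_cancel₀ (ne_of_gt hp0), ENNReal.rpow_one]
    have r2 : T ≤ b ^ p := by
      have htri : eLpNorm (fun x => ‖F x‖ + ‖G x‖) q μ ≤ eLpNorm F q μ + eLpNorm G q μ := by
        have h := eLpNorm_add_le hFm.norm hGm.norm hq1
        rw [eLpNorm_norm, eLpNorm_norm] at h
        exact h
      rw [hfW] at htri
      have hne : eLpNorm F q μ + eLpNorm G q μ ≠ ∞ :=
        ENNReal.add_ne_top.2 ⟨hF.eLpNorm_ne_top, hG.eLpNorm_ne_top⟩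
      have htr : (IW ^ (1 / p)).toReal ≤ b := by
        rw [hb_def, ← ENNReal.toReal_add hF.eLpNorm_ne_top hG.eLpNorm_ne_top]
        exact ENNReal.toReal_mono hne htri
      have hTe : T = ((IW ^ (1 / p)).toReal) ^ p := by
        rw [ENNReal.toReal_rpow, ← ENNReal.rpow_mul, one_div,
          inv_mul_cancel₀ (ne_of_gt hp0), ENNReal.rpow_one]
      rw [hTe]
      exact Real.rpow_le_rpow ENNReal.toReal_nonneg htr hp0.le
    have r3 : a ^ p ≤ k ^ (p / 2) * T ^ ((2 - p) / 2) := by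
      have hrhs_ne : IK ^ (p / 2) * IW ^ ((2 - p) / 2) ≠ ∞ :=
        ENNReal.mul_ne_top (ENNReal.rpow_ne_top_of_nonneg (by positivity) hIK_ne)
          (ENNReal.rpow_ne_top_of_nonneg (by linarith) hIW_ne)
      have h := ENNReal.toReal_mono hrhs_ne hHolder
      rw [r1] at h
      rw [ENNReal.toReal_mul, ← ENNReal.toReal_rpow, ← ENNReal.toReal_rpow] at h
      rwa [hIK_eq, ENNReal.toReal_ofReal hk0] at h
    -- final real algebra
    have hab : a ≤ b := by
      have h := eLpNorm_sub_le hFm hGm hq1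
      have hne : eLpNorm F q μ + eLpNorm G q μ ≠ ∞ :=
        ENNReal.add_ne_top.2 ⟨hF.eLpNorm_ne_top, hG.eLpNorm_ne_top⟩
      rw [ha_def, hb_def, ← ENNReal.toReal_add hF.eLpNorm_ne_top hG.eLpNorm_ne_top]
      exact ENNReal.toReal_mono hne h
    rcases eq_or_lt_of_le hb0 with hb | hb
    · have haz : a = 0 := le_antisymm (hab.trans hb.ge) ha0
      rw [haz]
      simpa using hk0
    · have step1 : a ^ 2 ≤ k * T ^ ((2 - p) / p) := by
        have h := Real.rpow_le_rpow (z := 2 / p) (Real.rpow_nonneg ha0 p) r3 (div_nonneg (by norm_num) hp0.le)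
        rw [← Real.rpow_natCast a 2]
        rw [← Real.rpow_mul ha0, show p * (2 / p) = (2:ℝ) by field_simp] at h
        rw [Real.mul_rpow (Real.rpow_nonneg hk0 _) (Real.rpow_nonneg hT0 _),
          ← Real.rpow_mul hk0, ← Real.rpow_mul hT0,
          show (p / 2) * (2 / p) = 1 by field_simp,
          show ((2 - p) / 2) * (2 / p) = (2 - p) / p by field_simp,
          Real.rpow_one] at h
        exact_mod_cast h
      have step2 : T ^ ((2 - p) / p) ≤ b ^ (2 - p) := by
        have h := Real.rpow_le_rpow (z := (2 - p) / p) hT0 r2 (div_nonneg (by linarith) hp0.le)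
        rwa [← Real.rpow_mul hb0, show p * ((2 - p) / p) = 2 - p by field_simp] at h
      have step3 : a ^ 2 ≤ k * b ^ (2 - p) :=
        step1.trans (mul_le_mul_of_nonneg_left step2 hk0)
      have hbp : 0 < b ^ (p - 2) := Real.rpow_pos_of_pos hb _
      have hbb : b ^ (p - 2) * b ^ (2 - p) = 1 := by
        rw [← Real.rpow_add hb, show p - 2 + (2 - p) = 0 by ring, Real.rpow_zero]
      calc b ^ (p - 2) * a ^ 2 ≤ b ^ (p - 2) * (k * b ^ (2 - p)) :=
            mul_le_mul_of_nonneg_left step3 hbp.le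
        _ = k * (b ^ (p - 2) * b ^ (2 - p)) := by ring
        _ = k := by rw [hbb, mul_one]
  calc (p - 1) * b ^ (p - 2) * a ^ 2 = (p - 1) * (b ^ (p - 2) * a ^ 2) := by ring
    _ ≤ (p - 1) * k := by
        have : (0:ℝ) ≤ p - 1 := by linarith
        exact mul_le_mul_of_nonneg_left hcore this
    _ ≤ _ := hstep
end

section
/- Let Ω ⊂ ℝ^N be a bounded open set and set d(x) = dist(x, ℝ^N \\ Ω) for x ∈ Ω. Let p > 1, s ≥ 1 and 0 < t < 1 satisfy ts < p, and if p < N assume moreover (s − ts)/(p − ts) ≤ p*/p where p* = Np/(N−p). Suppose there are constants C₀ > 0 and C₁ > 0 such that every continuously differentiable function u : ℝ^N → ℝ with compact support contained in Ω satisfies the Hardy inequality ‖u/d‖_{L^p(Ω)} ≤ C₀ ‖∇u‖_{L^p(Ω)} and the Sobolev-type inequality ‖u‖_{L^{sp(1−t)/(p−ts)}(Ω)} ≤ C₁ ‖∇u‖_{L^p(Ω)}. Then every such u satisfies ‖u · d^{−t}‖_{L^s(Ω)} ≤ C₀^t C₁^{1−t} ‖∇u‖_{L^p(Ω)}. -/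
open MeasureTheory

/-- Conditional form of the generalized Hardy inequality (Lemma 7.2 of the paper):
let `Ω ⊂ ℝ^N` be bounded open, `d x = dist(x, Ωᶜ)`, and let `p > 1`, `s ≥ 1`,
`0 < t < 1` with `ts < p`, and `(s - ts)/(p - ts) ≤ p*/p` when `p < N`
(`p* = Np/(N-p)`). If every `C¹` function `u` with compact support in `Ω` satisfies
the Hardy inequality `‖u/d‖_{L^p(Ω)} ≤ C₀ ‖∇u‖_{L^p(Ω)}` and the Sobolev inequality
`‖u‖_{L^{sp(1-t)/(p-ts)}(Ω)} ≤ C₁ ‖∇u‖_{L^p(Ω)}`, then every such `u` satisfies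
`‖u d^(-t)‖_{L^s(Ω)} ≤ C₀^t C₁^(1-t) ‖∇u‖_{L^p(Ω)}`. -/
theorem generalized_hardy_inequality (N : ℕ) (Ω : Set (EuclideanSpace ℝ (Fin N)))
    (hΩo : IsOpen Ω) (hΩb : Bornology.IsBounded Ω)
    (p s t : ℝ) (hp : 1 < p) (hs : 1 ≤ s) (ht0 : 0 < t) (ht1 : t < 1)
    (hts : t * s < p)
    (hcrit : p < (N : ℝ) → (s - t * s) / (p - t * s) ≤ ((N : ℝ) * p / ((N : ℝ) - p)) / p)
    (C₀ C₁ : ℝ) (hC₀ : 0 < C₀) (hC₁ : 0 < C₁)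
    (hHardy : ∀ u : EuclideanSpace ℝ (Fin N) → ℝ,
      ContDiff ℝ 1 u → HasCompactSupport u → tsupport u ⊆ Ω →
      (∫ x in Ω, |u x / Metric.infDist x Ωᶜ| ^ p) ^ (1 / p) ≤
        C₀ * (∫ x in Ω, ‖fderiv ℝ u x‖ ^ p) ^ (1 / p))
    (hSobolev : ∀ u : EuclideanSpace ℝ (Fin N) → ℝ,
      ContDiff ℝ 1 u → HasCompactSupport u → tsupport u ⊆ Ω →
      (∫ x in Ω, |u x| ^ (s * p * (1 - t) / (p - t * s))) ^
          (1 / (s * p * (1 - t) / (p - t * s))) ≤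
        C₁ * (∫ x in Ω, ‖fderiv ℝ u x‖ ^ p) ^ (1 / p)) :
    ∀ u : EuclideanSpace ℝ (Fin N) → ℝ,
      ContDiff ℝ 1 u → HasCompactSupport u → tsupport u ⊆ Ω →
      (∫ x in Ω, |u x * Metric.infDist x Ωᶜ ^ (-t)| ^ s) ^ (1 / s) ≤
        C₀ ^ t * C₁ ^ (1 - t) * (∫ x in Ω, ‖fderiv ℝ u x‖ ^ p) ^ (1 / p) := by
  intro u hu hcs hsupp
  have hp0 : (0:ℝ) < p := lt_trans one_pos hp
  have hs0 : (0:ℝ) < s := lt_of_lt_of_le one_pos hs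
  have hts0 : (0:ℝ) < t * s := mul_pos ht0 hs0
  have hpts : (0:ℝ) < p - t * s := sub_pos.mpr hts
  have h1t : (0:ℝ) < 1 - t := sub_pos.mpr ht1
  set d : EuclideanSpace ℝ (Fin N) → ℝ := fun x => Metric.infDist x Ωᶜ with hd
  set Gv : ℝ := ∫ x in Ω, ‖fderiv ℝ u x‖ ^ p with hGv
  have hGv0 : 0 ≤ Gv := integral_nonneg fun x => Real.rpow_nonneg (norm_nonneg _) _
  have hGr0 : 0 ≤ Gv ^ (1 / p) := Real.rpow_nonneg hGv0 _
  have hRHS0 : 0 ≤ C₀ ^ t * C₁ ^ (1 - t) * Gv ^ (1 / p) :=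
    mul_nonneg (mul_nonneg (Real.rpow_nonneg hC₀.le _) (Real.rpow_nonneg hC₁.le _)) hGr0
  -- trivial cases
  by_cases hcne : Ωᶜ.Nonempty
  swap
  · have hdz : ∀ x : EuclideanSpace ℝ (Fin N), Metric.infDist x Ωᶜ = 0 := by
      intro x
      simp [Set.not_nonempty_iff_eq_empty.mp hcne, Metric.infDist_empty]
    have hz : (∫ x in Ω, |u x * Metric.infDist x Ωᶜ ^ (-t)| ^ s) = 0 := by
      have h0 : ∀ x : EuclideanSpace ℝ (Fin N),
          |u x * Metric.infDist x Ωᶜ ^ (-t)| ^ s = 0 := by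
        intro x
        rw [hdz x, Real.zero_rpow (neg_ne_zero.mpr ht0.ne'), mul_zero, abs_zero,
          Real.zero_rpow hs0.ne']
      simp only [h0, integral_zero]
    rw [hz, Real.zero_rpow (one_div_ne_zero hs0.ne')]
    exact hRHS0
  by_cases hKne : (tsupport u).Nonempty
  swap
  · have hu0 : ∀ x, u x = 0 := fun x =>
      image_eq_zero_of_notMem_tsupport (by simp [Set.not_nonempty_iff_eq_empty.mp hKne])
    have hz : (∫ x in Ω, |u x * Metric.infDist x Ωᶜ ^ (-t)| ^ s) = 0 := by
      have h0 : ∀ x : EuclideanSpace ℝ (Fin N),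
          |u x * Metric.infDist x Ωᶜ ^ (-t)| ^ s = 0 := by
        intro x
        rw [hu0 x, zero_mul, abs_zero, Real.zero_rpow hs0.ne']
      simp only [h0, integral_zero]
    rw [hz, Real.zero_rpow (one_div_ne_zero hs0.ne')]
    exact hRHS0
  -- main case: positive lower bound for d on the support
  obtain ⟨x₀, hx₀, hmin'⟩ := IsCompact.exists_isMinOn hcs hKne
    (Metric.continuous_infDist_pt Ωᶜ).continuousOn
  have hmin : ∀ y ∈ tsupport u, d x₀ ≤ d y := fun y hy => hmin' hy
  set δ : ℝ := d x₀ with hδdef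
  have hδ : 0 < δ := by
    have hx₀Ω : x₀ ∈ Ω := hsupp hx₀
    exact (hΩo.isClosed_compl.notMem_iff_infDist_pos hcne).mp (fun h => h hx₀Ω)
  -- bound for u
  obtain ⟨M, hM⟩ := hu.continuous.bounded_above_of_compact_support hcs
  have hM' : ∀ x, |u x| ≤ M := fun x => (Real.norm_eq_abs _).symm.trans_le (hM x)
  have hM0 : 0 ≤ M := le_trans (abs_nonneg _) (hM' x₀)
  have hbound : ∀ x, |u x / d x| ≤ M / δ := by
    intro x
    by_cases hx : x ∈ tsupport u
    · rw [abs_div, abs_of_nonneg (Metric.infDist_nonneg : 0 ≤ d x)]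
      exact div_le_div₀ hM0 (hM' x) hδ (hmin x hx)
    · rw [image_eq_zero_of_notMem_tsupport hx]
      simpa using div_nonneg hM0 hδ.le
  -- finite measure
  have hΩfin : volume Ω < ⊤ := hΩb.measure_lt_top
  haveI : IsFiniteMeasure (volume.restrict Ω) :=
    ⟨by rwa [Measure.restrict_apply_univ]⟩
  -- the two Hölder factors
  set f : EuclideanSpace ℝ (Fin N) → ℝ := fun x => |u x / d x| ^ (t * s) with hf
  set g : EuclideanSpace ℝ (Fin N) → ℝ := fun x => |u x| ^ (s - t * s) with hg
  have hfm : Measurable f :=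
    (Real.continuous_rpow_const hts0.le).measurable.comp
      ((hu.continuous.measurable.div
        (Metric.continuous_infDist_pt Ωᶜ).measurable).abs)
  have hgm : Measurable g :=
    (Real.continuous_rpow_const (by nlinarith : (0:ℝ) ≤ s - t * s)).measurable.comp
      hu.continuous.measurable.abs
  have hfnn : ∀ x, 0 ≤ f x := fun x => Real.rpow_nonneg (abs_nonneg _) _
  have hgnn : ∀ x, 0 ≤ g x := fun x => Real.rpow_nonneg (abs_nonneg _) _
  have hfMem : MemLp f (ENNReal.ofReal (p / (t * s))) (volume.restrict Ω) := by
    refine MemLp.of_bound hfm.aestronglyMeasurable ((M / δ) ^ (t * s)) ?_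
    refine Filter.Eventually.of_forall fun x => ?_
    rw [Real.norm_eq_abs, abs_of_nonneg (hfnn x)]
    exact Real.rpow_le_rpow (abs_nonneg _) (hbound x) hts0.le
  have hgMem : MemLp g (ENNReal.ofReal (p / (p - t * s))) (volume.restrict Ω) := by
    refine MemLp.of_bound hgm.aestronglyMeasurable (M ^ (s - t * s)) ?_
    refine Filter.Eventually.of_forall fun x => ?_
    rw [Real.norm_eq_abs, abs_of_nonneg (hgnn x)]
    exact Real.rpow_le_rpow (abs_nonneg _) (hM' x) (by nlinarith)
  have hpq : Real.HolderConjugate (p / (t * s)) (p / (p - t * s)) := by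
    rw [Real.holderConjugate_iff]
    constructor
    · exact (one_lt_div hts0).mpr hts
    · rw [inv_div, inv_div]
      field_simp
      ring
  have hHolder := integral_mul_le_Lp_mul_Lq_of_nonneg hpq
    (Filter.Eventually.of_forall hfnn) (Filter.Eventually.of_forall hgnn) hfMem hgMem
  -- rewrite the integrals appearing in Hölder's inequality
  have hI_eq : (∫ x in Ω, |u x * Metric.infDist x Ωᶜ ^ (-t)| ^ s)
      = ∫ x in Ω, f x * g x := by
    refine integral_congr_ae (Filter.Eventually.of_forall fun x => ?_)
    show |u x * d x ^ (-t)| ^ s = f x * g x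
    by_cases hx : u x = 0
    · show _ = |u x / d x| ^ (t * s) * |u x| ^ (s - t * s)
      rw [hx, zero_mul, abs_zero, Real.zero_rpow hs0.ne', zero_div, abs_zero,
        Real.zero_rpow hts0.ne', zero_mul]
    · have hxK : x ∈ tsupport u := subset_tsupport u hx
      have hdx : 0 < d x := lt_of_lt_of_le hδ (hmin x hxK)
      have hux : 0 < |u x| := abs_pos.mpr hx
      have h1 : |u x * d x ^ (-t)| ^ s = |u x| ^ s * d x ^ (-(t * s)) := by
        rw [abs_mul, abs_of_nonneg (Real.rpow_nonneg hdx.le _),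
          Real.mul_rpow hux.le (Real.rpow_nonneg hdx.le _),
          ← Real.rpow_mul hdx.le, neg_mul]
      have h2 : f x * g x = |u x| ^ s * d x ^ (-(t * s)) := by
        have hfx : f x = |u x| ^ (t * s) * d x ^ (-(t * s)) := by
          show |u x / d x| ^ (t * s) = _
          rw [abs_div, abs_of_nonneg hdx.le, Real.div_rpow (abs_nonneg _) hdx.le,
            Real.rpow_neg hdx.le, div_eq_mul_inv]
        show f x * |u x| ^ (s - t * s) = _
        rw [hfx, mul_right_comm, ← Real.rpow_add hux,
          show t * s + (s - t * s) = s by ring]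
      rw [h1, h2]
  have hexp1 : t * s * (p / (t * s)) = p := by field_simp
  have hF_eq : (∫ x in Ω, f x ^ (p / (t * s))) = ∫ x in Ω, |u x / d x| ^ p := by
    refine integral_congr_ae (Filter.Eventually.of_forall fun x => ?_)
    show (|u x / d x| ^ (t * s)) ^ (p / (t * s)) = _
    rw [← Real.rpow_mul (abs_nonneg _), hexp1]
  have hexp2 : (s - t * s) * (p / (p - t * s)) = s * p * (1 - t) / (p - t * s) := by
    rw [← mul_div_assoc]
    congr 1
    ring
  have hG_eq : (∫ x in Ω, g x ^ (p / (p - t * s)))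
      = ∫ x in Ω, |u x| ^ (s * p * (1 - t) / (p - t * s)) := by
    refine integral_congr_ae (Filter.Eventually.of_forall fun x => ?_)
    show (|u x| ^ (s - t * s)) ^ (p / (p - t * s)) = _
    rw [← Real.rpow_mul (abs_nonneg _), hexp2]
  rw [hF_eq, hG_eq, one_div_div, one_div_div] at hHolder
  rw [hI_eq] at *
  set A : ℝ := ∫ x in Ω, |u x / d x| ^ p with hA
  set B : ℝ := ∫ x in Ω, |u x| ^ (s * p * (1 - t) / (p - t * s)) with hB
  have hA0 : 0 ≤ A := integral_nonneg fun x => Real.rpow_nonneg (abs_nonneg _) _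
  have hB0 : 0 ≤ B := integral_nonneg fun x => Real.rpow_nonneg (abs_nonneg _) _
  have hI0 : 0 ≤ ∫ x in Ω, f x * g x :=
    integral_nonneg fun x => mul_nonneg (hfnn x) (hgnn x)
  have hHa : A ^ (1 / p) ≤ C₀ * Gv ^ (1 / p) := hHardy u hu hcs hsupp
  have hSo : B ^ (1 / (s * p * (1 - t) / (p - t * s))) ≤ C₁ * Gv ^ (1 / p) :=
    hSobolev u hu hcs hsupp
  calc (∫ x in Ω, f x * g x) ^ (1 / s)
      ≤ (A ^ (t * s / p) * B ^ ((p - t * s) / p)) ^ (1 / s) :=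
        Real.rpow_le_rpow hI0 hHolder (by positivity)
    _ = (A ^ (1 / p)) ^ t * (B ^ (1 / (s * p * (1 - t) / (p - t * s)))) ^ (1 - t) := by
        rw [Real.mul_rpow (Real.rpow_nonneg hA0 _) (Real.rpow_nonneg hB0 _),
          ← Real.rpow_mul hA0, ← Real.rpow_mul hB0,
          show t * s / p * (1 / s) = 1 / p * t by field_simp,
          show (p - t * s) / p * (1 / s)
              = 1 / (s * p * (1 - t) / (p - t * s)) * (1 - t) by
            rw [one_div_div]
            field_simp,
          Real.rpow_mul hA0, Real.rpow_mul hB0]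
    _ ≤ (C₀ * Gv ^ (1 / p)) ^ t * (C₁ * Gv ^ (1 / p)) ^ (1 - t) :=
        mul_le_mul (Real.rpow_le_rpow (Real.rpow_nonneg hA0 _) hHa ht0.le)
          (Real.rpow_le_rpow (Real.rpow_nonneg hB0 _) hSo h1t.le)
          (Real.rpow_nonneg (Real.rpow_nonneg hB0 _) _)
          (Real.rpow_nonneg (mul_nonneg hC₀.le hGr0) _)
    _ = C₀ ^ t * C₁ ^ (1 - t) * Gv ^ (1 / p) := by
        rw [Real.mul_rpow hC₀.le hGr0, Real.mul_rpow hC₁.le hGr0,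
          mul_mul_mul_comm, ← Real.rpow_add_of_nonneg hGr0 ht0.le h1t.le,
          show t + (1 - t) = 1 by ring, Real.rpow_one]
end

section
/- Let (Ω, μ) be a measure space, let 1 ≤ p < ∞, and let α ∈ L^p(Ω, μ) be real-valued. Define the cone C_α = { v ∈ L^p(Ω, μ) : v(x) ≥ α(x) for μ-a.e. x }. Then for every u ∈ L^p(Ω, μ) one has dist_{L^p}(u, C_α) = ‖(u − α)⁻‖_{L^p}, i.e. the L^p distance from u to C_α equals the L^p norm of the negative part of u − α. -/
open MeasureTheory

/-- L^p content of Lemma 4.1 (ii)–(iii) of the paper: for `1 ≤ p < ∞` and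
`α, u ∈ L^p(Ω, μ)` real-valued, the `L^p` distance from `u` to the cone
`C_α = {v ∈ L^p : v ≥ α a.e.}` equals the `L^p` norm of the negative part
`(u - α)⁻ = max(α - u, 0)`. -/
theorem dist_to_cone_eq_negPart {Ω : Type*} [MeasurableSpace Ω] (μ : Measure Ω)
    (p : ℝ) (hp : 1 ≤ p) (α u : Ω → ℝ)
    (hα : MemLp α (ENNReal.ofReal p) μ) (hu : MemLp u (ENNReal.ofReal p) μ) :
    sInf {r : ℝ | ∃ w : Ω → ℝ, MemLp w (ENNReal.ofReal p) μ ∧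
        (∀ᵐ x ∂μ, α x ≤ w x) ∧
        r = (eLpNorm (u - w) (ENNReal.ofReal p) μ).toReal} =
      (eLpNorm (fun x => max (α x - u x) 0) (ENNReal.ofReal p) μ).toReal := by
  set q := ENNReal.ofReal p with hq
  set g : Ω → ℝ := fun x => max (α x - u x) 0 with hg
  have hw0 : MemLp (fun x => max (u x) (α x)) q μ := hu.sup hα
  have hkey : (u - fun x => max (u x) (α x)) = -g := by
    funext x
    simp only [Pi.sub_apply, Pi.neg_apply, hg]
    rcases le_total (α x) (u x) with h | h
    · rw [max_eq_left h, max_eq_right (by linarith)]; ring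
    · rw [max_eq_right h, max_eq_left (by linarith)]; ring
  have hmem : (eLpNorm g q μ).toReal ∈ {r : ℝ | ∃ w : Ω → ℝ, MemLp w q μ ∧
      (∀ᵐ x ∂μ, α x ≤ w x) ∧ r = (eLpNorm (u - w) q μ).toReal} := by
    refine ⟨fun x => max (u x) (α x), hw0, Filter.Eventually.of_forall fun x => le_max_right _ _, ?_⟩
    rw [hkey, eLpNorm_neg]
  refine le_antisymm (csInf_le ⟨0, fun r hr => ?_⟩ hmem) (le_csInf ⟨_, hmem⟩ ?_)
  · obtain ⟨w, hw, hle, rfl⟩ := hr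
    exact ENNReal.toReal_nonneg
  · rintro r ⟨w, hw, hle, rfl⟩
    have hmono : eLpNorm g q μ ≤ eLpNorm (u - w) q μ := by
      refine eLpNorm_mono_ae (hle.mono fun x hx => ?_)
      simp only [hg, Pi.sub_apply, Real.norm_eq_abs]
      rw [abs_of_nonneg (le_max_right _ _)]
      have h1 : α x - u x ≤ |u x - w x| := by
        calc α x - u x ≤ w x - u x := by linarith
        _ ≤ |w x - u x| := le_abs_self _
        _ = |u x - w x| := abs_sub_comm _ _
      exact max_le h1 (abs_nonneg _)
    exact ENNReal.toReal_mono ((hu.sub hw).2).ne hmono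
end

section
/- Let (Ω, μ) be a measure space, let 1 ≤ p < ∞, and let α, β ∈ L^p(Ω, μ) be real-valued functions such that μ({ x ∈ Ω : α(x) > β(x) }) > 0. Then there exists ε̄ > 0 such that no u ∈ L^p(Ω, μ) satisfies both ‖(u − α)⁻‖_{L^p} < ε̄ and ‖(u − β)⁺‖_{L^p} < ε̄. -/
open MeasureTheory
open scoped ENNReal NNReal

/-- L^p analogue of Lemma 5.1 of the paper: for `1 ≤ p < ∞` and real-valued
`α, β ∈ L^p(Ω, μ)` with `α > β` on a set of positive measure, there is `ε̄ > 0`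
such that no `u ∈ L^p(Ω, μ)` satisfies both `‖(u - α)⁻‖_p < ε̄` and
`‖(u - β)⁺‖_p < ε̄` (here `(u-α)⁻ = max(α-u,0)` and `(u-β)⁺ = max(u-β,0)`). -/
theorem enlarged_cones_disjoint {Ω : Type*} [MeasurableSpace Ω] (μ : Measure Ω)
    (p : ℝ) (hp : 1 ≤ p) (α β : Ω → ℝ)
    (hα : MemLp α (ENNReal.ofReal p) μ) (hβ : MemLp β (ENNReal.ofReal p) μ)
    (hpos : 0 < μ {x | β x < α x}) :
    ∃ ε : ℝ, 0 < ε ∧ ∀ u : Ω → ℝ, MemLp u (ENNReal.ofReal p) μ →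
      ¬ ((eLpNorm (fun x => max (α x - u x) 0) (ENNReal.ofReal p) μ).toReal < ε ∧
         (eLpNorm (fun x => max (u x - β x) 0) (ENNReal.ofReal p) μ).toReal < ε) := by
  have hp0 : 0 < p := lt_of_lt_of_le one_pos hp
  set q : ℝ≥0∞ := ENNReal.ofReal p with hq
  have hq1 : 1 ≤ q := by
    rw [hq, ← ENNReal.ofReal_one]
    exact ENNReal.ofReal_le_ofReal hp
  have hq0 : q ≠ 0 := (zero_lt_one.trans_le hq1).ne'
  have hqt : q ≠ ∞ := ENNReal.ofReal_ne_top
  have hqr : q.toReal = p := ENNReal.toReal_ofReal hp0.le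
  -- find δ > 0 with positive measure of {δ ≤ α - β}
  obtain ⟨n, hn⟩ : ∃ n : ℕ, 0 < μ {x | 1 / (n + 1 : ℝ) ≤ α x - β x} := by
    by_contra h
    push_neg at h
    simp only [le_zero_iff] at h
    have hsub : {x | β x < α x} ⊆ ⋃ n : ℕ, {x | 1 / (n + 1 : ℝ) ≤ α x - β x} := by
      intro x hx
      obtain ⟨n, hn⟩ := exists_nat_one_div_lt (show (0:ℝ) < α x - β x from sub_pos.mpr hx)
      exact Set.mem_iUnion.mpr ⟨n, hn.le⟩
    have h2 : μ (⋃ n : ℕ, {x | 1 / (n + 1 : ℝ) ≤ α x - β x}) = 0 :=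
      measure_iUnion_null h
    exact hpos.ne' (le_antisymm (h2 ▸ measure_mono hsub) zero_le)
  set δ : ℝ := 1 / (n + 1 : ℝ) with hδ
  have hδ0 : 0 < δ := by positivity
  set S : Set Ω := {x | δ ≤ α x - β x} with hS
  -- finite measure of S via Chebyshev
  have hαβ : MemLp (fun x => α x - β x) q μ := hα.sub hβ
  have hSfin : μ S < ∞ := by
    refine lt_of_le_of_lt (measure_mono ?_)
      (hαβ.meas_ge_lt_top hq0 hqt (ε := δ.toNNReal) ?_)
    · intro x hx
      simp only [Set.mem_setOf_eq] at hx ⊢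
      rw [← Real.toNNReal_coe (r := ‖α x - β x‖₊)]
      apply Real.toNNReal_le_toNNReal
      simp only [coe_nnnorm, Real.norm_eq_abs]
      exact hx.trans (le_abs_self _)
    · simp [Real.toNNReal_eq_zero, not_le, hδ0]
  -- S is null measurable
  have hαm := hα.1
  have hβm := hβ.1
  have hSnm : NullMeasurableSet S μ := by
    have hmeas : MeasurableSet {x | δ ≤ hαm.mk α x - hβm.mk β x} :=
      measurableSet_le measurable_const ((hαm.measurable_mk).sub (hβm.measurable_mk))
    refine NullMeasurableSet.congr hmeas.nullMeasurableSet ?_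
    filter_upwards [hαm.ae_eq_mk, hβm.ae_eq_mk] with x h1 h2
    show (δ ≤ AEStronglyMeasurable.mk α hαm x - AEStronglyMeasurable.mk β hβm x) = (δ ≤ α x - β x)
    rw [h1, h2]
  -- the constant indicator norm
  set cE : ℝ≥0∞ := eLpNorm (S.indicator fun _ => δ) q μ with hcE
  have hcE_eq : cE = ‖δ‖₊ * μ S ^ (1 / p) := by
    rw [hcE, eLpNorm_indicator_const₀ hSnm hq0 hqt, hqr, enorm_eq_nnnorm]
  have hcE_ne_top : cE ≠ ∞ := by
    rw [hcE_eq]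
    exact ENNReal.mul_ne_top ENNReal.coe_ne_top
      (ENNReal.rpow_ne_top_of_nonneg (by positivity) hSfin.ne)
  have hcE_pos : 0 < cE := by
    rw [hcE_eq]
    apply ENNReal.mul_pos
    · simp [hδ0.ne']
    · exact (ENNReal.rpow_pos hn (hSfin.ne)).ne'
  set c : ℝ := cE.toReal with hcdef
  have hc0 : 0 < c := ENNReal.toReal_pos hcE_pos.ne' hcE_ne_top
  refine ⟨c / 2, by positivity, ?_⟩
  rintro u hu ⟨h1, h2⟩
  set f : Ω → ℝ := fun x => max (α x - u x) 0 with hf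
  set g : Ω → ℝ := fun x => max (u x - β x) 0 with hg
  have hfm : AEStronglyMeasurable f μ :=
    ((hα.1.sub hu.1).sup aestronglyMeasurable_const : AEStronglyMeasurable ((α - u) ⊔ 0) μ)
  have hgm : AEStronglyMeasurable g μ :=
    ((hu.1.sub hβ.1).sup aestronglyMeasurable_const : AEStronglyMeasurable ((u - β) ⊔ 0) μ)
  have hfL : MemLp f q μ := by
    refine (hα.sub hu).of_le hfm ?_
    filter_upwards with x
    simp only [hf, Real.norm_eq_abs, Pi.sub_apply]
    rw [abs_of_nonneg (le_max_right _ _)]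
    exact max_le (le_abs_self _) (abs_nonneg _)
  have hgL : MemLp g q μ := by
    refine (hu.sub hβ).of_le hgm ?_
    filter_upwards with x
    simp only [hg, Real.norm_eq_abs, Pi.sub_apply]
    rw [abs_of_nonneg (le_max_right _ _)]
    exact max_le (le_abs_self _) (abs_nonneg _)
  -- lower bound: indicator ≤ f + g pointwise in norm
  have hmono : cE ≤ eLpNorm (f + g) q μ := by
    refine eLpNorm_mono (fun x => ?_)
    by_cases hx : x ∈ S
    · rw [Set.indicator_of_mem hx]
      have hfg : δ ≤ f x + g x := by
        have : δ ≤ α x - β x := hx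
        have h' : α x - β x = (α x - u x) + (u x - β x) := by ring
        refine this.trans ?_
        rw [h']
        exact add_le_add (le_max_left _ _) (le_max_left _ _)
      have hfg0 : (0:ℝ) ≤ f x + g x :=
        add_nonneg (le_max_right _ _) (le_max_right _ _)
      simp only [Real.norm_eq_abs, Pi.add_apply]
      rw [abs_of_nonneg hδ0.le, abs_of_nonneg hfg0]
      exact hfg
    · rw [Set.indicator_of_notMem hx]
      simp
  have htri : eLpNorm (f + g) q μ ≤ eLpNorm f q μ + eLpNorm g q μ :=
    eLpNorm_add_le hfm hgm hq1
  have hle : cE ≤ eLpNorm f q μ + eLpNorm g q μ := hmono.trans htri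
  have hfin1 : eLpNorm f q μ ≠ ∞ := hfL.eLpNorm_ne_top
  have hfin2 : eLpNorm g q μ ≠ ∞ := hgL.eLpNorm_ne_top
  have : c ≤ (eLpNorm f q μ).toReal + (eLpNorm g q μ).toReal := by
    rw [hcdef, ← ENNReal.toReal_add hfin1 hfin2]
    exact ENNReal.toReal_mono (ENNReal.add_ne_top.mpr ⟨hfin1, hfin2⟩) hle
  linarith
end
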